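/- arXiv:2102.03159 — 5 statements merged into one kernel-verified Lean document; each statement's English description precedes it below -/
import Mathlib

section
/- Let ν be a probability measure on ℝ^{D−1} and C ≥ 0 be such that ν satisfies the Poincaré inequality: for every continuously differentiable u : ℝ^{D−1} → ℝ with u and ‖∇u‖ square-integrable with respect to ν, Var_ν(u) ≤ C ∫ ‖∇u‖² dν. Let G be a real orthogonal D×D matrix, d an index, t ∈ ℝ, and let ι_t : ℝ^{D−1} → ℝᴰ insert the value t at coordinate d. Let f : ℝᴰ → ℝ be continuously differentiable and define φ(z) = f(G⁻¹ ι_t(z)); assume φ and ‖∇φ‖ are square-integrable with respect to ν. Then Var_ν(φ) ≤ C ∫ ‖G_{∖d} ∇f(G⁻¹ ι_t(z))‖² dν(z), where G_{∖d} is G with row d deleted and ∇f denotes the gradient of f. -/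
open MeasureTheory
open scoped BigOperators Matrix

section aux

variable {D : ℕ}

lemma aux_grad_inner {n : ℕ} (u : EuclideanSpace ℝ (Fin n) → ℝ)
    (z v : EuclideanSpace ℝ (Fin n)) :
    @inner ℝ _ _ (gradient u z) v = fderiv ℝ u z v := by
  unfold gradient
  exact InnerProductSpace.toDual_symm_apply

lemma aux_comp {n : ℕ} (w : EuclideanSpace ℝ (Fin n)) (k : Fin n) :
    w k = @inner ℝ _ _ w (EuclideanSpace.single k (1:ℝ)) := by
  simp [EuclideanSpace.inner_single_right]

lemma aux_insertNth_add (d : Fin (D+1)) (a b : ℝ) (p q : Fin D → ℝ) :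
    Fin.insertNth (α := fun _ => ℝ) d (a+b) (p+q) = Fin.insertNth (α := fun _ => ℝ) d a p + Fin.insertNth (α := fun _ => ℝ) d b q := by
  funext i
  refine Fin.succAboveCases d ?_ ?_ i <;> simp

lemma aux_insertNth_smul (d : Fin (D+1)) (c : ℝ) (p : Fin D → ℝ) :
    Fin.insertNth (α := fun _ => ℝ) d 0 (c • p) = c • Fin.insertNth (α := fun _ => ℝ) d 0 p := by
  funext i
  refine Fin.succAboveCases d ?_ ?_ i <;> simp

lemma aux_insertNth_single (d : Fin (D+1)) (k : Fin D) :
    Fin.insertNth (α := fun _ => ℝ) d 0 (Pi.single k 1) = Pi.single (d.succAbove k) 1 := by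
  funext i
  refine Fin.succAboveCases d ?_ ?_ i
  · simp [Pi.single_apply, (Fin.succAbove_ne d k).symm]
  · intro j
    simp [Pi.single_apply, Fin.succAbove_right_inj]

/-- The linear slice map. -/
noncomputable def Lmap (M : Matrix (Fin (D+1)) (Fin (D+1)) ℝ) (d : Fin (D+1)) :
    EuclideanSpace ℝ (Fin D) →L[ℝ] EuclideanSpace ℝ (Fin (D+1)) :=
  LinearMap.toContinuousLinearMap
  { toFun := fun z => WithLp.toLp 2 (M *ᵥ d.insertNth (0:ℝ) fun j => z j : Fin (D+1) → ℝ)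
    map_add' := by
      intro x y
      show WithLp.toLp 2 (M *ᵥ d.insertNth (0:ℝ) (fun j => x j + y j)) = _
      have : (fun j => x j + y j) = (fun j => x j) + fun j => y j := rfl
      have h := aux_insertNth_add d 0 0 (fun j => x j) (fun j => y j)
      rw [add_zero] at h
      rw [this, h, Matrix.mulVec_add, WithLp.toLp_add]
    map_smul' := by
      intro c x
      show WithLp.toLp 2 (M *ᵥ d.insertNth (0:ℝ) (fun j => c * x j)) = _
      have : (fun j => c * x j) = c • fun j => x j := rfl
      rw [this, aux_insertNth_smul, Matrix.mulVec_smul]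
      rfl }

end aux

/-- Subspace Poincaré inequality: if `ν` satisfies a Poincaré inequality with
constant `C` on `ℝ^D`, `G` is an orthogonal `(D+1)×(D+1)` matrix, and
`φ(z) = f(G⁻¹ ι_t(z))` with `ι_t` inserting value `t` at coordinate `d`, then the
variance of `φ` under `ν` is bounded by `C` times the `ν`-integral of the squared
norm of the gradient of `f` projected by `G` with row `d` deleted. -/
theorem subspace_poincare_inequality
    (D : ℕ)
    (ν : Measure (EuclideanSpace ℝ (Fin D))) [IsProbabilityMeasure ν]
    (C : ℝ) (hC : 0 ≤ C)
    (hPoincare : ∀ u : EuclideanSpace ℝ (Fin D) → ℝ,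
      ContDiff ℝ 1 u → MemLp u 2 ν → MemLp (fun z => ‖gradient u z‖) 2 ν →
      (∫ z, (u z) ^ 2 ∂ν) - (∫ z, u z ∂ν) ^ 2 ≤ C * ∫ z, ‖gradient u z‖ ^ 2 ∂ν)
    (G : Matrix (Fin (D + 1)) (Fin (D + 1)) ℝ) (hG : Gᵀ * G = 1 ∧ G * Gᵀ = 1)
    (d : Fin (D + 1)) (t : ℝ)
    (f : EuclideanSpace ℝ (Fin (D + 1)) → ℝ) (hf : ContDiff ℝ 1 f)
    (φ : EuclideanSpace ℝ (Fin D) → ℝ)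
    (hφ_def : ∀ z, φ z =
      f (WithLp.toLp 2 (G⁻¹ *ᵥ d.insertNth t fun j => z j : Fin (D + 1) → ℝ) :
        EuclideanSpace ℝ (Fin (D + 1))))
    (hφ_L2 : MemLp φ 2 ν)
    (hφ_grad_L2 : MemLp (fun z => ‖gradient φ z‖) 2 ν) :
    (∫ z, (φ z) ^ 2 ∂ν) - (∫ z, φ z ∂ν) ^ 2 ≤
      C * ∫ z, ∑ i ∈ Finset.univ.erase d,
        (∑ j, G i j *
          gradient f (WithLp.toLp 2 (G⁻¹ *ᵥ d.insertNth t fun k => z k : Fin (D + 1) → ℝ) :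
            EuclideanSpace ℝ (Fin (D + 1))) j) ^ 2 ∂ν := by
  classical
  have hGinv : G⁻¹ = Gᵀ := Matrix.inv_eq_left_inv hG.1
  set L := Lmap G⁻¹ d with hLdef
  set A : EuclideanSpace ℝ (Fin D) → EuclideanSpace ℝ (Fin (D + 1)) :=
    fun z => (WithLp.toLp 2 (G⁻¹ *ᵥ d.insertNth t fun j => z j : Fin (D + 1) → ℝ) :
      EuclideanSpace ℝ (Fin (D + 1))) with hA
  set c : EuclideanSpace ℝ (Fin (D + 1)) :=
    (WithLp.toLp 2 (G⁻¹ *ᵥ Fin.insertNth (α := fun _ => ℝ) d t 0 : Fin (D + 1) → ℝ) :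
      EuclideanSpace ℝ (Fin (D + 1))) with hc
  have hAeq : A = fun z => L z + c := by
    funext z
    show (WithLp.toLp 2 (G⁻¹ *ᵥ d.insertNth t fun j => z j : Fin (D + 1) → ℝ) :
        EuclideanSpace ℝ (Fin (D + 1)))
      = WithLp.toLp 2 (G⁻¹ *ᵥ d.insertNth 0 fun j => z j) + WithLp.toLp 2 (G⁻¹ *ᵥ d.insertNth t 0)
    have h := aux_insertNth_add d 0 t (fun j => z j) 0
    rw [zero_add, add_zero] at h
    rw [h, Matrix.mulVec_add, WithLp.toLp_add]
  have hAderiv : ∀ z, HasFDerivAt A L z := by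
    intro z; rw [hAeq]; exact (L.hasFDerivAt).add_const c
  have hAcd : ContDiff ℝ 1 A := by rw [hAeq]; exact (L.contDiff).add contDiff_const
  have hφeq : φ = f ∘ A := funext fun z => hφ_def z
  have hφcd : ContDiff ℝ 1 φ := hφeq ▸ hf.comp hAcd
  have hfdφ : ∀ z, fderiv ℝ φ z = (fderiv ℝ f (A z)).comp L := by
    intro z
    have h := ((hf.differentiable one_ne_zero (A z)).hasFDerivAt.comp z (hAderiv z))
    rw [hφeq]
    exact h.fderiv
  have hLsingle : ∀ k : Fin D,
      ∀ j, (L (EuclideanSpace.single k 1) : Fin (D + 1) → ℝ) j = G (d.succAbove k) j := by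
    intro k
    have h0 : (L (EuclideanSpace.single k 1) : Fin (D + 1) → ℝ)
        = (G⁻¹ *ᵥ d.insertNth 0 fun j => (EuclideanSpace.single k (1:ℝ)) j) := rfl
    have h1 : (fun j => (EuclideanSpace.single k (1:ℝ)) j) = Pi.single k (1:ℝ) := by
      funext j; simp [EuclideanSpace.single_apply, Pi.single_apply]
    intro j
    rw [h0, h1, aux_insertNth_single, Matrix.mulVec_single_one, hGinv]
    rfl
  have key : ∀ z : EuclideanSpace ℝ (Fin D), ‖gradient φ z‖ ^ 2 =
      ∑ i ∈ Finset.univ.erase d, (∑ j, G i j * gradient f (A z) j) ^ 2 := by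
    intro z
    have hwk : ∀ k : Fin D,
        gradient φ z k = ∑ j, G (d.succAbove k) j * gradient f (A z) j := by
      intro k
      rw [aux_comp (gradient φ z) k, aux_grad_inner, hfdφ z]
      have h2 : (fderiv ℝ f (A z)).comp L (EuclideanSpace.single k 1)
          = fderiv ℝ f (A z) (L (EuclideanSpace.single k 1)) := rfl
      rw [h2, ← aux_grad_inner f (A z) (L (EuclideanSpace.single k 1))]
      rw [PiLp.inner_apply]
      refine Finset.sum_congr rfl fun j _ => ?_
      simp only [RCLike.inner_apply, starRingEnd_apply, star_trivial]
      rw [hLsingle k j, mul_comm]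
    have hnorm : ‖gradient φ z‖ ^ 2 = ∑ k, gradient φ z k ^ 2 := by
      rw [← real_inner_self_eq_norm_sq, PiLp.inner_apply]
      refine Finset.sum_congr rfl fun k _ => ?_
      simp [RCLike.inner_apply, sq]
    have hre : ∑ i ∈ Finset.univ.erase d, (∑ j, G i j * gradient f (A z) j) ^ 2
        = ∑ k : Fin D, (∑ j, G (d.succAbove k) j * gradient f (A z) j) ^ 2 := by
      have h1 := Fin.sum_univ_succAbove
        (fun i => (∑ j, G i j * gradient f (A z) j) ^ 2) d
      have h2 := Finset.sum_erase_add Finset.univ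
        (fun i => (∑ j, G i j * gradient f (A z) j) ^ 2) (Finset.mem_univ d)
      simp only at h1 h2
      linarith
    rw [hnorm, hre]
    exact Finset.sum_congr rfl fun k _ => by rw [hwk k]
  have step := hPoincare φ hφcd hφ_L2 hφ_grad_L2
  refine step.trans (le_of_eq ?_)
  congr 1
  exact integral_congr_ae (Filter.Eventually.of_forall fun z => key z)
end

section
/- Let μ be a finite measure on EuclideanSpace ℝ (Fin D) with bounded support, let w : EuclideanSpace ℝ (Fin D) → ℝ be bounded and measurable, and let φ : ℝ → ℝ be real analytic on all of ℝ. Then the function Ψ : EuclideanSpace ℝ (Fin D) → ℝ defined by Ψ(g) = ∫∫ w(x) · φ(⟪x − x', g⟫) · w(x') dμ(x) dμ(x') is real analytic on all of EuclideanSpace ℝ (Fin D). -/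
open MeasureTheory
open scoped NNReal ENNReal

lemma local_coeff_bound (φ : ℝ → ℝ) (hφ : AnalyticOnNhd ℝ φ Set.univ) (t₀ : ℝ) :
    ∃ ε C : ℝ, 0 < ε ∧ ∀ t : ℝ, |t - t₀| < ε →
      (∀ n : ℕ, |iteratedDeriv n φ t / (n.factorial : ℝ)| * (2 * ε) ^ n ≤ C) ∧
      (∀ u : ℝ, |u| < ε →
        HasSum (fun n => (iteratedDeriv n φ t / (n.factorial : ℝ)) * u ^ n) (φ (t + u))) := by
  obtain ⟨p, rad, hball⟩ := hφ t₀ (Set.mem_univ _)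
  obtain ⟨ε', hε'0, hε'rad⟩ := ENNReal.lt_iff_exists_nnreal_btwn.1 hball.r_pos
  have hε'pos : 0 < ε' := by exact_mod_cast hε'0
  have hball' : HasFPowerSeriesOnBall φ p t₀ ε' := hball.mono hε'0 hε'rad.le
  have hradp : (↑ε' : ℝ≥0∞) < p.radius := hε'rad.trans_le hball.r_le
  have h34 : ((ε' / 4 + ε' / 2 : ℝ≥0) : ℝ≥0∞) < p.radius := by
    refine lt_of_le_of_lt (ENNReal.coe_le_coe.2 ?_) hradp
    rw [← NNReal.coe_le_coe]
    push_cast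
    have : (0:ℝ) ≤ ε' := ε'.coe_nonneg
    linarith
  have hsum := p.changeOriginSeries_summable_aux₁ h34
  set S : ℝ≥0∞ := ∑' s : Σ k l : ℕ, { s : Finset (Fin (k + l)) // s.card = l },
    ((‖p (s.1 + s.2.1)‖₊ * (ε' / 4) ^ s.2.1 * (ε' / 2) ^ s.1 : ℝ≥0) : ℝ≥0∞) with hSdef
  have hS : S ≠ ⊤ := ENNReal.tsum_coe_ne_top_iff_summable.2 hsum
  refine ⟨(ε' : ℝ) / 4, S.toReal, by positivity, fun t ht => ?_⟩
  set x : ℝ := t - t₀ with hxdef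
  have hx4 : ‖x‖₊ ≤ ε' / 4 := by
    rw [← NNReal.coe_le_coe]
    push_cast
    rw [Real.norm_eq_abs]
    exact ht.le
  have hx4' : (‖x‖₊ : ℝ≥0∞) ≤ ((ε' / 4 : ℝ≥0) : ℝ≥0∞) := ENNReal.coe_le_coe.2 hx4
  have hq : ε' / 4 < ε' := by
    rw [← NNReal.coe_lt_coe]; push_cast
    have : (0:ℝ) < ε' := hε'pos
    linarith
  have hxε' : (‖x‖₊ : ℝ≥0∞) < ↑ε' := lt_of_le_of_lt hx4' (ENNReal.coe_lt_coe.2 hq)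
  have hxrad : (‖x‖₊ : ℝ≥0∞) < p.radius := hxε'.trans hradp
  have hb0 := hball'.changeOrigin hxε'
  have htt : t₀ + x = t := by ring
  rw [htt] at hb0
  -- coefficient identification
  have hcoeff : ∀ n : ℕ, (p.changeOrigin x).coeff n = iteratedDeriv n φ t / (n.factorial : ℝ) := by
    intro n
    have h1 := hb0.factorial_smul (1 : ℝ) n
    rw [iteratedDeriv_eq_iteratedFDeriv]
    have h2 : (p.changeOrigin x).coeff n = (p.changeOrigin x) n fun _ => (1:ℝ) := rfl
    rw [h2, eq_div_iff (by exact_mod_cast Nat.factorial_ne_zero n : ((n.factorial : ℝ)) ≠ 0)]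
    rw [← h1, nsmul_eq_mul]
    ring
  constructor
  · -- coefficient bounds
    intro n
    rw [← hcoeff n]
    have hkey : ((‖p.changeOrigin x n‖₊ * (ε' / 2) ^ n : ℝ≥0) : ℝ≥0∞) ≤ S := by
      have hsl := p.changeOriginSeries_summable_aux₂ hxrad n
      calc ((‖p.changeOrigin x n‖₊ * (ε' / 2) ^ n : ℝ≥0) : ℝ≥0∞)
          = (‖p.changeOrigin x n‖₊ : ℝ≥0∞) * ((ε' / 2 : ℝ≥0) : ℝ≥0∞) ^ n := by
            push_cast; ring
        _ ≤ (∑' s : Σ l : ℕ, { s : Finset (Fin (n + l)) // s.card = l },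
              ((‖p (n + s.1)‖₊ * ‖x‖₊ ^ s.1 : ℝ≥0) : ℝ≥0∞)) * ((ε' / 2 : ℝ≥0) : ℝ≥0∞) ^ n := by
            refine mul_le_mul_left ?_ _
            rw [← ENNReal.coe_tsum hsl]
            exact ENNReal.coe_le_coe.2 (p.nnnorm_changeOrigin_le n hxrad)
        _ ≤ (∑' s : Σ l : ℕ, { s : Finset (Fin (n + l)) // s.card = l },
              ((‖p (n + s.1)‖₊ * (ε' / 4) ^ s.1 : ℝ≥0) : ℝ≥0∞)) * ((ε' / 2 : ℝ≥0) : ℝ≥0∞) ^ n := by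
            refine mul_le_mul_left (ENNReal.tsum_le_tsum fun s => ?_) _
            push_cast
            exact mul_le_mul_right (pow_le_pow_left' (by push_cast at hx4'; exact hx4') _) _
        _ = ∑' s : Σ l : ℕ, { s : Finset (Fin (n + l)) // s.card = l },
              ((‖p (n + s.1)‖₊ * (ε' / 4) ^ s.1 * (ε' / 2) ^ n : ℝ≥0) : ℝ≥0∞) := by
            rw [← ENNReal.tsum_mul_right]
            exact tsum_congr fun s => by push_cast; ring
        _ ≤ S := by
            have hrw : S = ∑' (k : ℕ),
                ∑' (b : (l : ℕ) × { s : Finset (Fin (k + l)) // s.card = l }),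
                ((‖p (k + b.1)‖₊ * (ε' / 4) ^ b.1 * (ε' / 2) ^ k : ℝ≥0) : ℝ≥0∞) := by
              rw [hSdef, ENNReal.tsum_sigma']
            rw [hrw]
            exact ENNReal.le_tsum n
    have := ENNReal.toReal_mono hS hkey
    simp only [ENNReal.coe_toReal, NNReal.coe_mul, NNReal.coe_pow, coe_nnnorm] at this
    have h2ε : 2 * ((ε' : ℝ) / 4) = (ε' : ℝ) / 2 := by ring
    rw [h2ε]
    refine le_trans (mul_le_mul_of_nonneg_right ?_ (by positivity)) (by
      convert this using 2 <;> push_cast <;> rfl)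
    -- |coeff| ≤ ‖p.changeOrigin x n‖
    calc |(p.changeOrigin x).coeff n|
        = ‖(p.changeOrigin x) n fun _ => (1:ℝ)‖ := by rw [Real.norm_eq_abs]; rfl
      _ ≤ ‖p.changeOrigin x n‖ * ∏ _i : Fin n, ‖(1:ℝ)‖ :=
          (p.changeOrigin x n).le_opNorm _
      _ = ‖p.changeOrigin x n‖ := by simp
  · -- HasSum
    intro u hu
    have humem : u ∈ Metric.eball (0:ℝ) (↑ε' - ↑‖x‖₊) := by
      rw [mem_emetric_ball_zero_iff, ← ENNReal.coe_sub]
      apply ENNReal.coe_lt_coe.2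
      rw [← NNReal.coe_lt_coe, NNReal.coe_sub (hx4.trans hq.le), coe_nnnorm, coe_nnnorm,
        Real.norm_eq_abs, Real.norm_eq_abs]
      have hxle : |x| ≤ (ε' : ℝ) / 4 := ht.le
      have : (0:ℝ) < ε' := hε'pos
      linarith
    have hs := hb0.hasSum humem
    convert hs using 2 with n
    · rfl
    rw [FormalMultilinearSeries.apply_eq_pow_smul_coeff, smul_eq_mul, hcoeff n]
    ring

lemma compact_coeff_bound (φ : ℝ → ℝ) (hφ : AnalyticOnNhd ℝ φ Set.univ) (M : ℝ) :
    ∃ r C : ℝ, 0 < r ∧ 0 ≤ C ∧ ∀ t : ℝ, |t| ≤ M →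
      (∀ n : ℕ, |iteratedDeriv n φ t / (n.factorial : ℝ)| * (2 * r) ^ n ≤ C) ∧
      (∀ u : ℝ, |u| < r →
        HasSum (fun n => (iteratedDeriv n φ t / (n.factorial : ℝ)) * u ^ n) (φ (t + u))) := by
  rcases lt_or_ge M 0 with hM | hM
  · exact ⟨1, 0, one_pos, le_refl _, fun t ht =>
      absurd (lt_of_le_of_lt ht hM) (not_lt.2 (abs_nonneg t))⟩
  choose ε C hε hC using fun t₀ => local_coeff_bound φ hφ t₀
  obtain ⟨I, hIK, hIcov⟩ := (isCompact_Icc (a := -M) (b := M)).elim_nhds_subcover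
    (fun t₀ => Metric.ball t₀ (ε t₀)) (fun t₀ _ => Metric.ball_mem_nhds _ (hε t₀))
  have hne : I.Nonempty := by
    rcases Finset.eq_empty_or_nonempty I with h | h
    · exfalso
      have h0 : (0:ℝ) ∈ Set.Icc (-M) M := by constructor <;> linarith
      have := hIcov h0
      simp [h] at this
    · exact h
  refine ⟨I.inf' hne ε, I.sup' hne (fun i => max (C i) 0), ?_, ?_, ?_⟩
  · exact (Finset.lt_inf'_iff hne).2 fun i _ => hε i
  · obtain ⟨i, hi⟩ := hne
    exact le_trans (le_max_right (C i) 0) (Finset.le_sup' (fun j => max (C j) 0) hi)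
  · intro t ht
    have htK : t ∈ Set.Icc (-M) M := abs_le.1 ht
    obtain ⟨i, hiI, hti⟩ := Set.mem_iUnion₂.1 (hIcov htK)
    have hdist : |t - i| < ε i := by
      rw [← Real.dist_eq]; exact Metric.mem_ball.1 hti
    obtain ⟨hbd, hsum⟩ := hC i t hdist
    have hrle : I.inf' hne ε ≤ ε i := Finset.inf'_le _ hiI
    have hrpos : 0 < I.inf' hne ε := (Finset.lt_inf'_iff hne).2 fun j _ => hε j
    constructor
    · intro n
      calc |iteratedDeriv n φ t / (n.factorial : ℝ)| * (2 * I.inf' hne ε) ^ n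
          ≤ |iteratedDeriv n φ t / (n.factorial : ℝ)| * (2 * ε i) ^ n := by
            apply mul_le_mul_of_nonneg_left _ (abs_nonneg _)
            exact pow_le_pow_left₀ (by linarith) (by linarith) n
        _ ≤ C i := hbd n
        _ ≤ max (C i) 0 := le_max_left _ _
        _ ≤ I.sup' hne (fun j => max (C j) 0) := Finset.le_sup' (fun j => max (C j) 0) hiI
    · intro u hu
      exact hsum u (lt_of_lt_of_le hu hrle)

open scoped RealInnerProductSpace

set_option maxHeartbeats 1000000 in
/-- Real analyticity of the sliced kernelized Stein discrepancy in the slice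
direction: for a finite measure `μ` with bounded support, a bounded measurable
weight `w`, and an entire real analytic `φ`, the function
`Ψ(g) = ∫∫ w(x) φ(⟪x − x', g⟫) w(x') dμ(x) dμ(x')` is real analytic on all of
`EuclideanSpace ℝ (Fin D)`. -/
theorem sksd_real_analytic
    (D : ℕ)
    (μ : Measure (EuclideanSpace ℝ (Fin D))) [IsFiniteMeasure μ]
    (hsupp : ∃ s : Set (EuclideanSpace ℝ (Fin D)), Bornology.IsBounded s ∧ μ sᶜ = 0)
    (w : EuclideanSpace ℝ (Fin D) → ℝ) (hw_meas : Measurable w)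
    (hw_bdd : ∃ Cw : ℝ, ∀ x, |w x| ≤ Cw)
    (φ : ℝ → ℝ) (hφ : AnalyticOnNhd ℝ φ Set.univ)
    (Ψ : EuclideanSpace ℝ (Fin D) → ℝ)
    (hΨ_def : ∀ g, Ψ g = ∫ x, ∫ x', w x * φ ⟪x - x', g⟫ * w x' ∂μ ∂μ) :
    AnalyticOnNhd ℝ Ψ Set.univ := by
  classical
  obtain ⟨Cw, hCw⟩ := hw_bdd
  have hCw0 : 0 ≤ Cw := le_trans (abs_nonneg _) (hCw 0)
  obtain ⟨s, hs_bdd, hs_null⟩ := hsupp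
  obtain ⟨R0, hR0⟩ := isBounded_iff_forall_norm_le.1 hs_bdd.closure
  set R : ℝ := max R0 0 with hRdef
  have hR : ∀ x ∈ closure s, ‖x‖ ≤ R := fun x hx => le_trans (hR0 x hx) (le_max_left _ _)
  have hRnn : 0 ≤ R := le_max_right _ _
  have hs'_null : μ (closure s)ᶜ = 0 :=
    measure_mono_null (Set.compl_subset_compl.2 subset_closure) hs_null
  set W : EuclideanSpace ℝ (Fin D) → ℝ := (closure s).indicator w with hWdef
  have hW_meas : Measurable W := hw_meas.indicator measurableSet_closure
  have hW_le : ∀ x, |W x| ≤ Cw := by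
    intro x; by_cases hx : x ∈ closure s
    · rw [hWdef, Set.indicator_of_mem hx]; exact hCw x
    · rw [hWdef, Set.indicator_of_notMem hx]; simpa using hCw0
  have hW_mem : ∀ x, W x ≠ 0 → x ∈ closure s := by
    intro x h; by_contra hx; exact h (Set.indicator_of_notMem hx w)
  have hφc : Continuous φ := by
    rw [continuous_iff_continuousAt]; exact fun x => (hφ x (Set.mem_univ x)).continuousAt
  have hae : ∀ᵐ x ∂μ, x ∈ closure s := by
    rw [MeasureTheory.ae_iff]
    exact hs'_null
  have hcont_inner : ∀ g : EuclideanSpace ℝ (Fin D), Continuous fun z :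
      EuclideanSpace ℝ (Fin D) × EuclideanSpace ℝ (Fin D) => (⟪z.1 - z.2, g⟫ : ℝ) :=
    fun g => (continuous_fst.sub continuous_snd).inner continuous_const
  have hIP : ∀ (g : EuclideanSpace ℝ (Fin D))
      (z : EuclideanSpace ℝ (Fin D) × EuclideanSpace ℝ (Fin D)),
      z.1 ∈ closure s → z.2 ∈ closure s → |⟪z.1 - z.2, g⟫| ≤ 2 * R * ‖g‖ := by
    intro g z h1 h2
    calc |⟪z.1 - z.2, g⟫| ≤ ‖z.1 - z.2‖ * ‖g‖ := abs_real_inner_le_norm _ _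
      _ ≤ (‖z.1‖ + ‖z.2‖) * ‖g‖ :=
          mul_le_mul_of_nonneg_right (norm_sub_le _ _) (norm_nonneg _)
      _ ≤ 2 * R * ‖g‖ := by
          nlinarith [hR _ h1, hR _ h2, norm_nonneg g, norm_nonneg z.1, norm_nonneg z.2]
  have hint : ∀ (F : EuclideanSpace ℝ (Fin D) × EuclideanSpace ℝ (Fin D) → ℝ) (B : ℝ),
      Measurable F → (∀ z, |F z| ≤ B) → Integrable F (μ.prod μ) := by
    intro F B hFm hFb
    exact (integrable_const B).mono' hFm.aestronglyMeasurable
      (Filter.Eventually.of_forall fun z => by rw [Real.norm_eq_abs]; exact hFb z)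
  have hφbd : ∀ g : EuclideanSpace ℝ (Fin D), ∃ B : ℝ, 0 ≤ B ∧
      ∀ y : ℝ, |y| ≤ 2 * R * ‖g‖ → |φ y| ≤ B := by
    intro g
    obtain ⟨B, hB⟩ := (isCompact_Icc (a := -(2*R*‖g‖))
      (b := 2*R*‖g‖)).exists_bound_of_continuousOn hφc.continuousOn
    refine ⟨max B 0, le_max_right _ _, fun y hy => ?_⟩
    rw [← Real.norm_eq_abs]
    have hy' : y ∈ Set.Icc (-(2*R*‖g‖)) (2*R*‖g‖) := by
      constructor <;> [linarith [abs_le.1 hy |>.1]; exact (abs_le.1 hy).2]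
    exact le_trans (hB y hy') (le_max_left _ _)
  have hΨint : ∀ g : EuclideanSpace ℝ (Fin D),
      Integrable (fun z : EuclideanSpace ℝ (Fin D) × EuclideanSpace ℝ (Fin D) =>
        W z.1 * φ ⟪z.1 - z.2, g⟫ * W z.2) (μ.prod μ) := by
    intro g
    obtain ⟨B, hB0, hB⟩ := hφbd g
    apply hint _ (Cw * B * Cw)
    · exact ((hW_meas.comp measurable_fst).mul
        (hφc.comp (hcont_inner g)).measurable).mul (hW_meas.comp measurable_snd)
    · intro z
      by_cases h1 : W z.1 = 0
      · rw [h1]; simp; positivity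
      by_cases h2 : W z.2 = 0
      · rw [h2]; simp; positivity
      have hφz := hB _ (hIP g z (hW_mem _ h1) (hW_mem _ h2))
      rw [abs_mul, abs_mul]
      exact mul_le_mul (mul_le_mul (hW_le z.1) hφz (abs_nonneg _) hCw0)
        (hW_le z.2) (abs_nonneg _) (by positivity)
  have hΨ' : ∀ g, Ψ g = ∫ z : EuclideanSpace ℝ (Fin D) × EuclideanSpace ℝ (Fin D),
      W z.1 * φ ⟪z.1 - z.2, g⟫ * W z.2 ∂(μ.prod μ) := by
    intro g
    rw [hΨ_def g]
    have h1 : ∫ x, ∫ x', w x * φ ⟪x - x', g⟫ * w x' ∂μ ∂μ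
        = ∫ x, ∫ x', W x * φ ⟪x - x', g⟫ * W x' ∂μ ∂μ := by
      apply integral_congr_ae
      filter_upwards [hae] with x hx
      apply integral_congr_ae
      filter_upwards [hae] with x' hx'
      rw [hWdef, Set.indicator_of_mem hx, Set.indicator_of_mem hx']
    rw [h1]
    exact MeasureTheory.integral_integral (hΨint g)
  -- main part
  intro g₀ _
  obtain ⟨r, C, hr, hC0, hrC⟩ := compact_coeff_bound φ hφ (2 * R * ‖g₀‖)
  set a : ℕ → ℝ → ℝ := fun n t => iteratedDeriv n φ t / (n.factorial : ℝ) with hadef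
  have ha_cont : ∀ n, Continuous (a n) := fun n =>
    ((hφ.contDiff.continuous_iteratedDeriv n le_top)).div_const _
  set c : ℕ → EuclideanSpace ℝ (Fin D) × EuclideanSpace ℝ (Fin D) → ℝ :=
    fun n z => W z.1 * a n ⟪z.1 - z.2, g₀⟫ * W z.2 with hcdef
  have hc_meas : ∀ n, Measurable (c n) := fun n =>
    ((hW_meas.comp measurable_fst).mul
      (((ha_cont n).comp (hcont_inner g₀)).measurable)).mul (hW_meas.comp measurable_snd)
  have hc_bd : ∀ n z, |c n z| ≤ Cw ^ 2 * (C / (2*r) ^ n) := by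
    intro n z
    have hpos : (0:ℝ) < (2*r) ^ n := by positivity
    by_cases h1 : W z.1 = 0
    · rw [hcdef]; simp [h1]; positivity
    by_cases h2 : W z.2 = 0
    · rw [hcdef]; simp [h2]; positivity
    have hta : |a n ⟪z.1 - z.2, g₀⟫| ≤ C / (2*r) ^ n := by
      rw [le_div_iff₀ hpos]
      exact (hrC _ (hIP g₀ z (hW_mem _ h1) (hW_mem _ h2))).1 n
    rw [hcdef]
    simp only [abs_mul]
    calc |W z.1| * |a n ⟪z.1 - z.2, g₀⟫| * |W z.2|
        ≤ Cw * (C / (2*r) ^ n) * Cw :=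
          mul_le_mul (mul_le_mul (hW_le z.1) hta (abs_nonneg _) hCw0)
            (hW_le z.2) (abs_nonneg _) (by positivity)
      _ = Cw ^ 2 * (C / (2*r) ^ n) := by ring
  set V : ℝ := ((μ.prod μ) Set.univ).toReal with hVdef
  have hV0 : 0 ≤ V := ENNReal.toReal_nonneg
  set Dn : ℕ → ℝ := fun n => Cw ^ 2 * (C / (2*r) ^ n) * (2*R) ^ n with hDdef
  have hD0 : ∀ n, 0 ≤ Dn n := fun n => by positivity
  have hcP : ∀ (n : ℕ) (m : Fin n → EuclideanSpace ℝ (Fin D)) z,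
      |c n z * ∏ i, ⟪z.1 - z.2, m i⟫| ≤ Dn n * ∏ i, ‖m i‖ := by
    intro n m z
    rw [abs_mul]
    have hprodnn : (0:ℝ) ≤ ∏ i, ‖m i‖ := Finset.prod_nonneg fun i _ => norm_nonneg _
    by_cases h1 : W z.1 = 0
    · rw [hcdef]; simp [h1]; positivity
    by_cases h2 : W z.2 = 0
    · rw [hcdef]; simp [h2]; positivity
    have hmem1 := hW_mem _ h1
    have hmem2 := hW_mem _ h2
    have hnormz : ‖z.1 - z.2‖ ≤ 2*R := by
      have := hR _ hmem1; have := hR _ hmem2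
      calc ‖z.1 - z.2‖ ≤ ‖z.1‖ + ‖z.2‖ := norm_sub_le _ _
        _ ≤ 2*R := by linarith
    have hprod : |∏ i, ⟪z.1 - z.2, m i⟫| ≤ (2*R) ^ n * ∏ i, ‖m i‖ := by
      rw [Finset.abs_prod]
      calc ∏ i, |⟪z.1 - z.2, m i⟫| ≤ ∏ i, (2*R) * ‖m i‖ := by
            apply Finset.prod_le_prod (fun i _ => abs_nonneg _) (fun i _ => ?_)
            calc |⟪z.1 - z.2, m i⟫| ≤ ‖z.1 - z.2‖ * ‖m i‖ := abs_real_inner_le_norm _ _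
              _ ≤ (2*R) * ‖m i‖ := mul_le_mul_of_nonneg_right hnormz (norm_nonneg _)
        _ = (2*R) ^ n * ∏ i, ‖m i‖ := by
            rw [Finset.prod_mul_distrib, Finset.prod_const]
            simp
    calc |c n z| * |∏ i, ⟪z.1 - z.2, m i⟫|
        ≤ (Cw ^ 2 * (C / (2*r) ^ n)) * ((2*R) ^ n * ∏ i, ‖m i‖) :=
          mul_le_mul (hc_bd n z) hprod (abs_nonneg _) (by positivity)
      _ = Dn n * ∏ i, ‖m i‖ := by rw [hDdef]; ring
  have hint' : ∀ (n : ℕ) (m : Fin n → EuclideanSpace ℝ (Fin D)),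
      Integrable (fun z : EuclideanSpace ℝ (Fin D) × EuclideanSpace ℝ (Fin D) =>
        c n z * ∏ i, ⟪z.1 - z.2, m i⟫) (μ.prod μ) := by
    intro n m
    apply hint _ (Dn n * ∏ i, ‖m i‖)
    · exact (hc_meas n).mul
        (continuous_finset_prod Finset.univ fun i _ => hcont_inner (m i)).measurable
    · exact fun z => hcP n m z
  set Q : ∀ n : ℕ, MultilinearMap ℝ
      (fun _ : Fin n => EuclideanSpace ℝ (Fin D)) ℝ := fun n =>
    { toFun := fun m => ∫ z, c n z * ∏ i, ⟪z.1 - z.2, m i⟫ ∂(μ.prod μ)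
      map_update_add' := by
        intro dec m j x y
        have hP : ∀ (v : EuclideanSpace ℝ (Fin D)) (mm : Fin n → EuclideanSpace ℝ (Fin D)),
            ((MultilinearMap.mkPiAlgebra ℝ (Fin n) ℝ).compLinearMap
              (fun _ => (innerSL ℝ v).toLinearMap)) mm = ∏ i, ⟪v, mm i⟫ := fun v mm => rfl
        have hpt : ∀ z : EuclideanSpace ℝ (Fin D) × EuclideanSpace ℝ (Fin D),
            c n z * ∏ i, ⟪z.1 - z.2, Function.update m j (x + y) i⟫
            = c n z * ∏ i, ⟪z.1 - z.2, Function.update m j x i⟫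
              + c n z * ∏ i, ⟪z.1 - z.2, Function.update m j y i⟫ := by
          intro z
          rw [← hP (z.1 - z.2) (Function.update m j (x+y)),
            ← hP (z.1 - z.2) (Function.update m j x), ← hP (z.1 - z.2) (Function.update m j y),
            MultilinearMap.map_update_add, mul_add]
        calc (∫ z, c n z * ∏ i, ⟪z.1 - z.2, Function.update m j (x + y) i⟫ ∂(μ.prod μ))
            = ∫ z, (c n z * ∏ i, ⟪z.1 - z.2, Function.update m j x i⟫
              + c n z * ∏ i, ⟪z.1 - z.2, Function.update m j y i⟫) ∂(μ.prod μ) := by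
              exact integral_congr_ae (Filter.Eventually.of_forall hpt)
          _ = _ := integral_add (hint' n (Function.update m j x)) (hint' n (Function.update m j y))
      map_update_smul' := by
        intro dec m j rc x
        have hP : ∀ (v : EuclideanSpace ℝ (Fin D)) (mm : Fin n → EuclideanSpace ℝ (Fin D)),
            ((MultilinearMap.mkPiAlgebra ℝ (Fin n) ℝ).compLinearMap
              (fun _ => (innerSL ℝ v).toLinearMap)) mm = ∏ i, ⟪v, mm i⟫ := fun v mm => rfl
        have hpt : ∀ z : EuclideanSpace ℝ (Fin D) × EuclideanSpace ℝ (Fin D),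
            c n z * ∏ i, ⟪z.1 - z.2, Function.update m j (rc • x) i⟫
            = rc * (c n z * ∏ i, ⟪z.1 - z.2, Function.update m j x i⟫) := by
          intro z
          rw [← hP (z.1 - z.2) (Function.update m j (rc • x)),
            ← hP (z.1 - z.2) (Function.update m j x), MultilinearMap.map_update_smul]
          rw [smul_eq_mul]; ring
        calc (∫ z, c n z * ∏ i, ⟪z.1 - z.2, Function.update m j (rc • x) i⟫ ∂(μ.prod μ))
            = ∫ z, rc * (c n z * ∏ i, ⟪z.1 - z.2, Function.update m j x i⟫) ∂(μ.prod μ) :=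
              integral_congr_ae (Filter.Eventually.of_forall hpt)
          _ = rc • ∫ z, c n z * ∏ i, ⟪z.1 - z.2, Function.update m j x i⟫ ∂(μ.prod μ) := by
              rw [MeasureTheory.integral_const_mul, smul_eq_mul] } with hQdef
  have hQb : ∀ (n : ℕ) (m : Fin n → EuclideanSpace ℝ (Fin D)),
      ‖Q n m‖ ≤ (Dn n * V) * ∏ i, ‖m i‖ := by
    intro n m
    calc ‖Q n m‖ ≤ (Dn n * ∏ i, ‖m i‖) * V := by
          apply norm_integral_le_of_norm_le_const
          exact Filter.Eventually.of_forall fun z => by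
            rw [Real.norm_eq_abs]; exact hcP n m z
      _ = (Dn n * V) * ∏ i, ‖m i‖ := by ring
  set q : FormalMultilinearSeries ℝ (EuclideanSpace ℝ (Fin D)) ℝ :=
    fun n => (Q n).mkContinuous (Dn n * V) (hQb n) with hqdef
  have hqnorm : ∀ n, ‖q n‖ ≤ Dn n * V := fun n =>
    (Q n).mkContinuous_norm_le (by positivity) (hQb n)
  set ρ : ℝ := r / (2*R + 1) with hρdef
  have hρpos : 0 < ρ := by positivity
  have hrad : ENNReal.ofReal ρ ≤ q.radius := by
    have heq : ENNReal.ofReal ρ = ((ρ.toNNReal : ℝ≥0) : ℝ≥0∞) := rfl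
    rw [heq]
    apply FormalMultilinearSeries.le_radius_of_bound _ (Cw ^ 2 * C * V)
    intro n
    have h2 : ((ρ.toNNReal : ℝ≥0) : ℝ) = ρ := Real.coe_toNNReal _ hρpos.le
    have hkey : Dn n * ρ ^ n ≤ Cw ^ 2 * C := by
      have h3 : (2*R) ^ n * ρ ^ n ≤ (2*r) ^ n := by
        rw [← mul_pow]
        apply pow_le_pow_left₀ (by positivity) ?_ n
        have h2R1 : (2*R+1) ≠ 0 := by positivity
        have hrr' : 2*R*ρ + ρ = r := by
          rw [hρdef]; field_simp
        linarith [hρpos.le, hr.le]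
      have h4 : C / (2*r) ^ n * ((2*R) ^ n * ρ ^ n) ≤ C / (2*r) ^ n * (2*r) ^ n :=
        mul_le_mul_of_nonneg_left h3 (by positivity)
      have h5 : C / (2*r) ^ n * (2*r) ^ n = C := div_mul_cancel₀ _ (by positivity)
      calc Dn n * ρ ^ n = Cw ^ 2 * (C / (2*r) ^ n * ((2*R) ^ n * ρ ^ n)) := by
            rw [hDdef]; ring
        _ ≤ Cw ^ 2 * (C / (2*r) ^ n * (2*r) ^ n) := mul_le_mul_of_nonneg_left h4 (by positivity)
        _ = Cw ^ 2 * C := by rw [h5]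
    calc ‖q n‖ * ((ρ.toNNReal : ℝ≥0) : ℝ) ^ n ≤ (Dn n * V) * ρ ^ n := by
          rw [h2]
          exact mul_le_mul_of_nonneg_right (hqnorm n) (by positivity)
      _ = (Dn n * ρ ^ n) * V := by ring
      _ ≤ (Cw ^ 2 * C) * V := mul_le_mul_of_nonneg_right hkey hV0
  have hball : HasFPowerSeriesOnBall Ψ q g₀ (ENNReal.ofReal ρ) := by
    refine ⟨hrad, by rwa [ENNReal.ofReal_pos], ?_⟩
    intro h hh
    have hh' : ‖h‖ < ρ := by
      rw [mem_emetric_ball_zero_iff, ← ofReal_norm] at hh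
      exact (ENNReal.ofReal_lt_ofReal_iff hρpos).1 hh
    have h2Rh : 2 * R * ‖h‖ < r := by
      have hrr : (2*R + 1) * ρ = r := by
        rw [hρdef]; field_simp
      nlinarith [norm_nonneg h, mul_lt_mul_of_pos_left hh' (show (0:ℝ) < 2*R+1 by linarith)]
    -- pointwise HasSum
    have hptsum : ∀ z : EuclideanSpace ℝ (Fin D) × EuclideanSpace ℝ (Fin D),
        HasSum (fun n => c n z * ⟪z.1 - z.2, h⟫ ^ n)
          (W z.1 * φ (⟪z.1 - z.2, g₀⟫ + ⟪z.1 - z.2, h⟫) * W z.2) := by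
      intro z
      by_cases h1 : W z.1 = 0
      · have he : (fun n => c n z * ⟪z.1 - z.2, h⟫ ^ n) = fun _ => (0:ℝ) := by
          funext n; rw [hcdef]; simp [h1]
        rw [he, h1]
        simpa using hasSum_zero
      by_cases h2 : W z.2 = 0
      · have he : (fun n => c n z * ⟪z.1 - z.2, h⟫ ^ n) = fun _ => (0:ℝ) := by
          funext n; rw [hcdef]; simp [h2]
        rw [he, h2]
        simpa using hasSum_zero
      have hu : |⟪z.1 - z.2, h⟫| < r :=
        lt_of_le_of_lt (hIP h z (hW_mem _ h1) (hW_mem _ h2)) h2Rh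
      have hts := (hrC _ (hIP g₀ z (hW_mem _ h1) (hW_mem _ h2))).2 _ hu
      have h5 : (fun n => c n z * ⟪z.1 - z.2, h⟫ ^ n)
          = fun n => (W z.1 * (a n ⟪z.1 - z.2, g₀⟫ * ⟪z.1 - z.2, h⟫ ^ n)) * W z.2 := by
        funext n; rw [hcdef]; ring
      rw [h5]
      exact (hts.mul_left _).mul_right _
    -- geometric bound
    set τ : ℝ := (2 * R * ‖h‖) / (2*r) with hτdef
    have hτ0 : 0 ≤ τ := by positivity
    have hτ1 : τ < 1 := by
      rw [hτdef, div_lt_one (by positivity)]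
      linarith
    have hfb : ∀ n z, |c n z * ⟪z.1 - z.2, h⟫ ^ n| ≤ (Cw ^ 2 * C) * τ ^ n := by
      intro n z
      have h6 := hcP n (fun _ => h) z
      simp only [Finset.prod_const, Finset.card_univ, Fintype.card_fin] at h6
      calc |c n z * ⟪z.1 - z.2, h⟫ ^ n| ≤ Dn n * ‖h‖ ^ n := h6
        _ = (Cw ^ 2 * C) * τ ^ n := by
            rw [hDdef, hτdef, div_pow, mul_pow]
            field_simp
    have hgeo : Summable fun n : ℕ => (Cw ^ 2 * C) * τ ^ n :=
      (summable_geometric_of_lt_one hτ0 hτ1).mul_left _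
    have hgeo' : Summable fun n : ℕ => (Cw ^ 2 * C) * τ ^ n * V := hgeo.mul_right _
    have hfint : ∀ n, Integrable
        (fun z : EuclideanSpace ℝ (Fin D) × EuclideanSpace ℝ (Fin D) =>
          c n z * ⟪z.1 - z.2, h⟫ ^ n) (μ.prod μ) := by
      intro n
      have he : (fun z : EuclideanSpace ℝ (Fin D) × EuclideanSpace ℝ (Fin D) =>
          c n z * ⟪z.1 - z.2, h⟫ ^ n)
          = fun z => c n z * ∏ _i : Fin n, ⟪z.1 - z.2, h⟫ := by
        funext z
        simp [Finset.prod_const]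
      rw [he]
      exact hint' n (fun _ => h)
    have hIntsum : Summable fun n => ∫ z, c n z * ⟪z.1 - z.2, h⟫ ^ n ∂(μ.prod μ) := by
      apply Summable.of_norm_bounded hgeo'
      intro n
      apply norm_integral_le_of_norm_le_const
      exact Filter.Eventually.of_forall fun z => by
        rw [Real.norm_eq_abs]; exact hfb n z
    have hswap : ∫ z, (∑' n, c n z * ⟪z.1 - z.2, h⟫ ^ n) ∂(μ.prod μ)
        = ∑' n, ∫ z, c n z * ⟪z.1 - z.2, h⟫ ^ n ∂(μ.prod μ) := by
      apply integral_tsum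
      · exact fun n => (hfint n).1
      · have hb : ∀ n : ℕ, ∫⁻ z, ‖c n z * ⟪z.1 - z.2, h⟫ ^ n‖₊ ∂(μ.prod μ)
            ≤ ENNReal.ofReal ((Cw ^ 2 * C) * τ ^ n) * (μ.prod μ) Set.univ := by
          intro n
          calc ∫⁻ z, ‖c n z * ⟪z.1 - z.2, h⟫ ^ n‖₊ ∂(μ.prod μ)
              ≤ ∫⁻ _z, ENNReal.ofReal ((Cw ^ 2 * C) * τ ^ n) ∂(μ.prod μ) := by
                apply lintegral_mono
                intro z
                show (↑‖c n z * ⟪z.1 - z.2, h⟫ ^ n‖₊ : ℝ≥0∞)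
                  ≤ ENNReal.ofReal (Cw ^ 2 * C * τ ^ n)
                rw [← enorm_eq_nnnorm, ← ofReal_norm, Real.norm_eq_abs]
                exact ENNReal.ofReal_le_ofReal (hfb n z)
            _ = ENNReal.ofReal ((Cw ^ 2 * C) * τ ^ n) * (μ.prod μ) Set.univ :=
                lintegral_const _
        refine ne_top_of_le_ne_top ?_ (ENNReal.tsum_le_tsum hb)
        rw [ENNReal.tsum_mul_right]
        apply ENNReal.mul_ne_top
        · rw [← ENNReal.ofReal_tsum_of_nonneg (fun n => by positivity) hgeo]
          exact ENNReal.ofReal_ne_top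
        · exact measure_ne_top _ _
    have hΨval : Ψ (g₀ + h) = ∑' n, ∫ z, c n z * ⟪z.1 - z.2, h⟫ ^ n ∂(μ.prod μ) := by
      rw [hΨ' (g₀ + h), ← hswap]
      apply integral_congr_ae
      filter_upwards with z
      rw [(hptsum z).tsum_eq, inner_add_right]
    have hfinal : HasSum (fun n => ∫ z, c n z * ⟪z.1 - z.2, h⟫ ^ n ∂(μ.prod μ))
        (Ψ (g₀ + h)) := by
      rw [hΨval]; exact hIntsum.hasSum
    have hqn : ∀ n : ℕ, (q n fun _ => h) = ∫ z, c n z * ⟪z.1 - z.2, h⟫ ^ n ∂(μ.prod μ) := by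
      intro n
      have h7 : (q n fun _ => h) = Q n (fun _ => h) := rfl
      rw [h7]
      have h8 : Q n (fun _ => h) = ∫ z, c n z * ∏ _i : Fin n, ⟪z.1 - z.2, h⟫ ∂(μ.prod μ) := rfl
      rw [h8]
      apply integral_congr_ae
      apply Filter.Eventually.of_forall
      intro z
      simp [Finset.prod_const]
    have h9 : (fun n : ℕ => (q n fun _ => h))
        = fun n => ∫ z, c n z * ⟪z.1 - z.2, h⟫ ^ n ∂(μ.prod μ) := funext hqn
    rw [h9]
    exact hfinal
  exact ⟨q, ENNReal.ofReal ρ, hball⟩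
end

section
/- Let U ⊆ ℝᵈ be a nonempty connected open set and let f : ℝᵈ → ℝ be real analytic at every point of U. If f is not identically zero on U (i.e., there exists x₀ ∈ U with f(x₀) ≠ 0), then the zero set {x ∈ U : f(x) = 0} has d-dimensional Lebesgue measure zero. -/
open MeasureTheory Metric Set

theorem countable_of_isolated' (Z : Set ℝ)
    (h : ∀ z ∈ Z, ∃ ε > 0, ∀ w ∈ Z, w ∈ ball z ε → w = z) : Z.Countable := by
  have key : ∀ z : Z, ∃ pq : ℚ × ℚ, (pq.1 : ℝ) < z ∧ (z : ℝ) < pq.2 ∧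
      ∀ w ∈ Z, (pq.1 : ℝ) < w → (w : ℝ) < pq.2 → w = z := by
    rintro ⟨z, hz⟩
    obtain ⟨ε, hε, hiso⟩ := h z hz
    obtain ⟨p, hp1, hp2⟩ := exists_rat_btwn (show z - ε < z by linarith)
    obtain ⟨q, hq1, hq2⟩ := exists_rat_btwn (show z < z + ε by linarith)
    refine ⟨(p, q), hp2, hq1, fun w hw h1 h2 => hiso w hw ?_⟩
    rw [mem_ball, Real.dist_eq, abs_lt]
    constructor <;> linarith
  choose F hF1 hF2 hF3 using key
  have hinj : Function.Injective F := by
    intro a b hab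
    have := hF3 b a.1 a.2 (hab ▸ hF1 a) (hab ▸ hF2 a)
    exact Subtype.ext this
  rw [← Set.countable_coe_iff]
  exact hinj.countable

theorem one_dim_zero_set {s : Set ℝ} (hc : IsPreconnected s) (h : ℝ → ℝ)
    (hf : ∀ x ∈ s, AnalyticAt ℝ h x) (hne : ∃ z ∈ s, h z ≠ 0) :
    volume {t | t ∈ s ∧ h t = 0} = 0 := by
  obtain ⟨z₁, hz₁, hz₁ne⟩ := hne
  have hiso : ∀ z ∈ {t | t ∈ s ∧ h t = 0}, ∃ ε > 0,
      ∀ w ∈ {t | t ∈ s ∧ h t = 0}, w ∈ ball z ε → w = z := by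
    rintro z ⟨hzs, hz0⟩
    rcases (hf z hzs).eventually_eq_zero_or_eventually_ne_zero with hev | hev
    · exact absurd (AnalyticOnNhd.eqOn_zero_of_preconnected_of_eventuallyEq_zero
        (fun x hx => hf x hx) hc hzs hev hz₁) hz₁ne
    · rw [Filter.eventually_iff, Metric.mem_nhdsWithin_iff] at hev
      obtain ⟨ε, hε, hball⟩ := hev
      refine ⟨ε, hε, ?_⟩
      rintro w ⟨hws, hw0⟩ hwb
      by_contra hwz
      exact hball ⟨hwb, hwz⟩ hw0
  exact ((countable_of_isolated' _ hiso).measure_zero _)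

-- membership of snoc in a pi-ball
theorem snoc_mem_ball {n : ℕ} (c : Fin (n + 1) → ℝ) {r : ℝ} (hr : 0 < r)
    (y : Fin n → ℝ) (t : ℝ) :
    Fin.snoc y t ∈ ball c r ↔ y ∈ ball (Fin.init c) r ∧ t ∈ ball (c (Fin.last n)) r := by
  rw [ball_pi _ hr, ball_pi _ hr, Set.mem_univ_pi, Set.mem_univ_pi]
  constructor
  · intro hx
    refine ⟨fun j => ?_, ?_⟩
    · have := hx j.castSucc
      simpa [Fin.snoc_castSucc, Fin.init] using this
    · have := hx (Fin.last n)
      simpa [Fin.snoc_last] using this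
  · rintro ⟨hy, ht⟩ i
    refine Fin.lastCases ?_ (fun j => ?_) i
    · simpa [Fin.snoc_last] using ht
    · simpa [Fin.snoc_castSucc, Fin.init] using hy j

-- analyticity of y ↦ snoc y t
theorem analyticAt_snoc_left {n : ℕ} (t : ℝ) (y : Fin n → ℝ) :
    AnalyticAt ℝ (fun y : Fin n → ℝ => (Fin.snoc y t : Fin (n + 1) → ℝ)) y := by
  have heq : (fun y : Fin n → ℝ => (Fin.snoc y t : Fin (n + 1) → ℝ)) =
      fun y => (ContinuousLinearMap.pi (R := ℝ) (M := Fin n → ℝ) (φ := fun _ : Fin (n+1) => ℝ) (fun i : Fin (n + 1) =>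
        Fin.lastCases (motive := fun _ => (Fin n → ℝ) →L[ℝ] ℝ) 0 (fun j => ContinuousLinearMap.proj j) i)) y
        + Fin.snoc (0 : Fin n → ℝ) t := by
    funext y
    funext i
    refine Fin.lastCases ?_ (fun j => ?_) i
    · simp [Fin.snoc_last, ContinuousLinearMap.pi_apply]
    · simp [Fin.snoc_castSucc, ContinuousLinearMap.pi_apply]
  rw [heq]
  exact ((ContinuousLinearMap.pi (R := ℝ) (M := Fin n → ℝ) (φ := fun _ : Fin (n+1) => ℝ) _).analyticAt y).add analyticAt_const

-- analyticity of t ↦ snoc y t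
theorem analyticAt_snoc_right {n : ℕ} (y : Fin n → ℝ) (t : ℝ) :
    AnalyticAt ℝ (fun t : ℝ => (Fin.snoc y t : Fin (n + 1) → ℝ)) t := by
  have heq : (fun t : ℝ => (Fin.snoc y t : Fin (n + 1) → ℝ)) =
      fun t => (Fin.snoc y (0:ℝ) : Fin (n+1) → ℝ)
        + ((ContinuousLinearMap.id ℝ ℝ).smulRight (Fin.snoc (0 : Fin n → ℝ) (1:ℝ))) t := by
    funext t
    funext i
    refine Fin.lastCases ?_ (fun j => ?_) i
    · simp [Fin.snoc_last]
    · simp [Fin.snoc_castSucc]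
  rw [heq]
  exact analyticAt_const.add (((ContinuousLinearMap.id ℝ ℝ).smulRight _).analyticAt t)

theorem ball_version : ∀ (n : ℕ) (g : (Fin n → ℝ) → ℝ) (c : Fin n → ℝ) (r : ℝ), 0 < r →
    (∀ x ∈ ball c r, AnalyticAt ℝ g x) → (∃ x ∈ ball c r, g x ≠ 0) →
    volume {x | x ∈ ball c r ∧ g x = 0} = 0 := by
  intro n
  induction n with
  | zero =>
    intro g c r hr hg ⟨x₀, hx₀, hx₀ne⟩
    have : {x | x ∈ ball c r ∧ g x = 0} = ∅ := by
      ext x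
      simp only [Set.mem_setOf_eq, Set.mem_empty_iff_false, iff_false, not_and]
      intro hx hgx
      exact hx₀ne (by rw [Subsingleton.elim x₀ x]; exact hgx)
    rw [this, measure_empty]
  | succ n IH =>
    intro g c r hr hg ⟨x₀, hx₀, hx₀ne⟩
    set c' : Fin n → ℝ := Fin.init c with hc'
    set a : ℝ := c (Fin.last n) with ha
    -- the measurable equiv (Fin n → ℝ) × ℝ ≃ Fin (n+1) → ℝ
    set m : ((Fin n → ℝ) × ℝ) ≃ᵐ (Fin (n + 1) → ℝ) :=
      (MeasurableEquiv.prodComm : (Fin n → ℝ) × ℝ ≃ᵐ ℝ × (Fin n → ℝ)).trans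
        (MeasurableEquiv.piFinSuccAbove (fun _ => ℝ) (Fin.last n)).symm with hm
    have hm_apply : ∀ (y : Fin n → ℝ) (t : ℝ), m (y, t) = Fin.snoc y t := by
      intro y t
      have : m (y, t)
          = (MeasurableEquiv.piFinSuccAbove (fun _ => ℝ) (Fin.last n)).symm (t, y) := rfl
      rw [this, MeasurableEquiv.piFinSuccAbove_symm_apply]
      simp [Fin.insertNthEquiv, Fin.insertNth_last']
    have hmp : MeasurePreserving m (volume.prod volume) volume := by
      have h1 : MeasurePreserving
          (MeasurableEquiv.prodComm : (Fin n → ℝ) × ℝ ≃ᵐ ℝ × (Fin n → ℝ))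
          (volume.prod volume) (volume.prod volume) :=
        ⟨MeasurableEquiv.prodComm.measurable, Measure.prod_swap⟩
      have h2 := (volume_preserving_piFinSuccAbove (fun _ : Fin (n+1) => ℝ) (Fin.last n)).symm
      exact (h2.comp h1).comp (MeasurePreserving.id _) |>.comp (MeasurePreserving.id _)
    -- measurability of the zero set
    have hcont : ContinuousOn g (ball c r) := fun x hx => (hg x hx).continuousAt.continuousWithinAt
    have hopen : IsOpen (ball c r ∩ g ⁻¹' ({0}ᶜ)) :=
      hcont.isOpen_inter_preimage isOpen_ball (isOpen_compl_singleton)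
    have hZmeas : MeasurableSet {x | x ∈ ball c r ∧ g x = 0} := by
      have : {x | x ∈ ball c r ∧ g x = 0} = ball c r \ (ball c r ∩ g ⁻¹' ({0}ᶜ)) := by
        ext x
        simp only [Set.mem_setOf_eq, Set.mem_diff, Set.mem_inter_iff, Set.mem_preimage,
          Set.mem_compl_iff, Set.mem_singleton_iff, not_and, not_not]
        tauto
      rw [this]
      exact measurableSet_ball.diff hopen.measurableSet
    -- the not-identically-zero witness in snoc coordinates
    obtain ⟨hy₀, ht₀⟩ := (snoc_mem_ball c hr (Fin.init x₀) (x₀ (Fin.last n))).mp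
      (by rwa [Fin.snoc_init_self])
    have hgx₀ : g (Fin.snoc (Fin.init x₀) (x₀ (Fin.last n))) ≠ 0 := by
      rwa [Fin.snoc_init_self]
    -- the bad set A
    set A : Set (Fin n → ℝ) :=
      {y | y ∈ ball c' r ∧ ∀ t ∈ ball a r, g (Fin.snoc y t) = 0} with hA
    -- A is null by induction
    have hAnull : volume A = 0 := by
      set gq : (Fin n → ℝ) → ℝ := fun y => g (Fin.snoc y (x₀ (Fin.last n))) with hgq
      have hgq_an : ∀ y ∈ ball c' r, AnalyticAt ℝ gq y := by
        intro y hy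
        show AnalyticAt ℝ (g ∘ fun y => (Fin.snoc y (x₀ (Fin.last n)) : Fin (n+1) → ℝ)) y
        exact AnalyticAt.comp
          (f := fun y => (Fin.snoc y (x₀ (Fin.last n)) : Fin (n+1) → ℝ)) (x := y)
          (hg _ ((snoc_mem_ball c hr y _).mpr ⟨hy, ht₀⟩)) (analyticAt_snoc_left _ y)
      have := IH gq c' r hr hgq_an ⟨Fin.init x₀, hy₀, hgx₀⟩
      refine measure_mono_null ?_ this
      rintro y ⟨hy, hall⟩
      exact ⟨hy, hall _ ht₀⟩
    -- slices are null for y ∉ A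
    have hslice : ∀ y ∉ A, volume (Prod.mk y ⁻¹' (m ⁻¹' {x | x ∈ ball c r ∧ g x = 0})) = 0 := by
      intro y hyA
      by_cases hy : y ∈ ball c' r
      · have hyA' : ∃ t ∈ ball a r, g (Fin.snoc y t) ≠ 0 := by
          by_contra hno
          push_neg at hno
          exact hyA ⟨hy, hno⟩
        have han : ∀ t ∈ ball a r, AnalyticAt ℝ (fun t => g (Fin.snoc y t)) t := by
          intro t ht
          show AnalyticAt ℝ (g ∘ fun t => (Fin.snoc y t : Fin (n+1) → ℝ)) t
          exact AnalyticAt.comp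
            (f := fun t => (Fin.snoc y t : Fin (n+1) → ℝ)) (x := t)
            (hg _ ((snoc_mem_ball c hr y t).mpr ⟨hy, ht⟩)) (analyticAt_snoc_right y t)
        have h1d := one_dim_zero_set (convex_ball a r).isPreconnected _ han hyA'
        refine measure_mono_null ?_ h1d
        intro t ht
        simp only [Set.mem_preimage, hm_apply, Set.mem_setOf_eq] at ht
        exact ⟨((snoc_mem_ball c hr y t).mp ht.1).2, ht.2⟩
      · have : Prod.mk y ⁻¹' (m ⁻¹' {x | x ∈ ball c r ∧ g x = 0}) = ∅ := by
          ext t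
          simp only [Set.mem_preimage, hm_apply, Set.mem_setOf_eq, Set.mem_empty_iff_false,
            iff_false, not_and]
          intro hmem
          exact absurd ((snoc_mem_ball c hr y t).mp hmem).1 hy
        rw [this, measure_empty]
    -- assemble via Fubini
    rw [← hmp.measure_preimage hZmeas.nullMeasurableSet]
    rw [Measure.measure_prod_null ((hmp.measurable hZmeas) : MeasurableSet _)]
    have : ∀ᵐ y : Fin n → ℝ, y ∉ A := by
      rw [← measure_eq_zero_iff_ae_notMem] at *
      exact hAnull
    filter_upwards [this] with y hy
    simpa using hslice y hy

theorem pi_version (n : ℕ) (U : Set (Fin n → ℝ)) (hU_conn : IsPreconnected U)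
    (hU_open : IsOpen U) (g : (Fin n → ℝ) → ℝ) (hg : ∀ x ∈ U, AnalyticAt ℝ g x)
    (hne : ∃ x ∈ U, g x ≠ 0) :
    volume {x | x ∈ U ∧ g x = 0} = 0 := by
  obtain ⟨x₁, hx₁, hx₁ne⟩ := hne
  -- choose a ball inside U around each point
  have hball : ∀ x : U, ∃ r > 0, ball (x : Fin n → ℝ) r ⊆ U := fun x =>
    Metric.isOpen_iff.mp hU_open x x.2
  choose rad hrad hsub using hball
  have hcover : U ⊆ ⋃ x : U, ball (x : Fin n → ℝ) (rad x) := by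
    intro x hx
    exact Set.mem_iUnion.mpr ⟨⟨x, hx⟩, mem_ball_self (hrad ⟨x, hx⟩)⟩
  obtain ⟨T, hTc, hTeq⟩ := TopologicalSpace.isOpen_iUnion_countable
    (fun x : U => ball (x : Fin n → ℝ) (rad x)) (fun _ => isOpen_ball)
  have hsub' : {x | x ∈ U ∧ g x = 0} ⊆
      ⋃ x ∈ T, {z | z ∈ ball (x : Fin n → ℝ) (rad x) ∧ g z = 0} := by
    rintro z ⟨hz, hgz⟩
    have := hcover hz
    rw [← hTeq] at this
    obtain ⟨x, hxT, hxz⟩ := Set.mem_iUnion₂.mp this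
    exact Set.mem_iUnion₂.mpr ⟨x, hxT, hxz, hgz⟩
  refine measure_mono_null hsub' ((measure_biUnion_null_iff hTc).mpr ?_)
  intro x hxT
  apply ball_version n g (x : Fin n → ℝ) (rad x) (hrad x)
    (fun z hz => hg z (hsub x hz))
  -- g is not identically zero on this ball, by the identity principle
  by_contra hno
  push_neg at hno
  have hev : g =ᶠ[nhds (x : Fin n → ℝ)] 0 := by
    filter_upwards [ball_mem_nhds (x : Fin n → ℝ) (hrad x)] with z hz
    exact hno z hz
  have := AnalyticOnNhd.eqOn_zero_of_preconnected_of_eventuallyEq_zero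
    (fun z hz => hg z hz) hU_conn x.2 hev hx₁
  exact hx₁ne this

/-- Zero set theorem (Mityagin): if `f` is real analytic at every point of a
nonempty connected open set `U ⊆ ℝᵈ` and is not identically zero on `U`, then its
zero set within `U` has Lebesgue measure zero. -/
theorem analytic_zero_set_measure_zero
    (d : ℕ)
    (U : Set (EuclideanSpace ℝ (Fin d)))
    (hU_ne : U.Nonempty) (hU_conn : IsConnected U) (hU_open : IsOpen U)
    (f : EuclideanSpace ℝ (Fin d) → ℝ)
    (hf : ∀ x ∈ U, AnalyticAt ℝ f x)
    (hf_ne : ∃ x₀ ∈ U, f x₀ ≠ 0) :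
    volume {x | x ∈ U ∧ f x = 0} = 0 := by
  obtain ⟨x₀, hx₀U, hx₀⟩ := hf_ne
  set φ : EuclideanSpace ℝ (Fin d) ≃L[ℝ] (Fin d → ℝ) := EuclideanSpace.equiv (Fin d) ℝ with hφ
  set U' : Set (Fin d → ℝ) := φ '' U with hU'
  set g : (Fin d → ℝ) → ℝ := f ∘ φ.symm with hg
  have hg_an : ∀ y ∈ U', AnalyticAt ℝ g y := by
    rintro y ⟨x, hxU, rfl⟩
    have h1 : AnalyticAt ℝ f (φ.symm (φ x)) := by
      rw [ContinuousLinearEquiv.symm_apply_apply]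
      exact hf x hxU
    exact h1.comp ((φ.symm : (Fin d → ℝ) →L[ℝ] EuclideanSpace ℝ (Fin d)).analyticAt _)
  have hU'_open : IsOpen U' := φ.toHomeomorph.isOpenMap U hU_open
  have hU'_conn : IsPreconnected U' :=
    (hU_conn.image φ φ.continuous.continuousOn).isPreconnected
  have hne' : ∃ y ∈ U', g y ≠ 0 := by
    refine ⟨φ x₀, ⟨x₀, hx₀U, rfl⟩, ?_⟩
    simpa [hg, ContinuousLinearEquiv.symm_apply_apply] using hx₀
  have hpi := pi_version d U' hU'_conn hU'_open g hg_an hne'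
  -- transfer back
  have hpre : {x | x ∈ U ∧ f x = 0}
      = (MeasurableEquiv.toLp 2 (Fin d → ℝ)).symm ⁻¹' {y | y ∈ U' ∧ g y = 0} := by
    ext x
    have hcoe : (MeasurableEquiv.toLp 2 (Fin d → ℝ)).symm x = φ x := rfl
    simp only [Set.mem_preimage, Set.mem_setOf_eq, hcoe]
    constructor
    · rintro ⟨hxU, hfx⟩
      refine ⟨⟨x, hxU, rfl⟩, ?_⟩
      simpa [hg, ContinuousLinearEquiv.symm_apply_apply] using hfx
    · rintro ⟨⟨x', hx'U, hx'⟩, hgx⟩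
      have : x' = x := φ.injective hx'
      subst this
      refine ⟨hx'U, ?_⟩
      simpa [hg, ContinuousLinearEquiv.symm_apply_apply] using hgx
  rw [hpre]
  rw [(EuclideanSpace.volume_preserving_symm_measurableEquiv_toLp (Fin d)).measure_preimage_emb
    (MeasurableEquiv.toLp 2 (Fin d → ℝ)).symm.measurableEmbedding]
  exact hpi
end

section
/- Let n ≥ r ≥ 1 and let S and U be real n×r matrices with orthonormal columns, i.e. SᵀS = I_r and UᵀU = I_r. Then there exists a real orthogonal r×r matrix O such that ‖S − U·O‖_F ≤ √2 · ‖S·Sᵀ·(I_n − U·Uᵀ)‖_F, where ‖·‖_F denotes the Frobenius norm of a matrix (‖A‖_F² = tr(AᵀA)). -/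
open scoped Matrix

/-- Frobenius norm of a real matrix, `‖A‖_F = √(tr (Aᵀ A))`. -/
noncomputable def frobNorm {m n : Type*} [Fintype m] [Fintype n]
    (A : Matrix m n ℝ) : ℝ :=
  Real.sqrt (Aᵀ * A).trace

section ProcrustesAux

open Matrix

variable {r : ℕ}

lemma dmv {a b : ℕ} (A : Matrix (Fin a) (Fin b) ℝ) (x : Fin b → ℝ) (y : Fin a → ℝ) :
    (A *ᵥ x) ⬝ᵥ y = x ⬝ᵥ (Aᵀ *ᵥ y) := by
  rw [dotProduct_comm, dotProduct_mulVec, ← mulVec_transpose, dotProduct_comm]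

lemma dot_self_nonneg {a : ℕ} (x : Fin a → ℝ) : 0 ≤ x ⬝ᵥ x :=
  Finset.sum_nonneg fun _ _ => mul_self_nonneg _

lemma star_mat (B : Matrix (Fin r) (Fin r) ℝ) : star B = Bᵀ := by
  rw [Matrix.star_eq_conjTranspose, conjTranspose_eq_transpose_of_trivial]

lemma step (M : Matrix (Fin r) (Fin r) ℝ)
    (hM : ∀ x : Fin r → ℝ, (M *ᵥ x) ⬝ᵥ (M *ᵥ x) ≤ x ⬝ᵥ x) {t : ℝ} (ht : 0 < t)
    (hinv : IsUnit (M + t • (1 : Matrix (Fin r) (Fin r) ℝ))) :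
    ∃ O : Matrix (Fin r) (Fin r) ℝ, Oᵀ * O = 1 ∧
      ((Mᵀ * M).trace + 2 * t * M.trace + t ^ 2 * r) / (1 + t) - t * r ≤ (Mᵀ * O).trace := by
  set N : Matrix (Fin r) (Fin r) ℝ := M + t • 1 with hN
  have hA : (Nᵀ * N).IsHermitian := by
    rw [← conjTranspose_eq_transpose_of_trivial]
    exact isHermitian_conjTranspose_mul_self N
  set d : Fin r → ℝ := hA.eigenvalues with hd
  set Q : Matrix (Fin r) (Fin r) ℝ := (hA.eigenvectorUnitary : Matrix (Fin r) (Fin r) ℝ) with hQdef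
  have hQ1 : star Q * Q = 1 := mem_unitaryGroup_iff'.mp hA.eigenvectorUnitary.2
  have hQ2 : Q * star Q = 1 := mem_unitaryGroup_iff.mp hA.eigenvectorUnitary.2
  have hspec : Nᵀ * N = Q * diagonal d * star Q := by
    simpa using hA.spectral_theorem
  -- eigenvalue facts
  have hd_eq : ∀ i, d i = (N *ᵥ ⇑(hA.eigenvectorBasis i)) ⬝ᵥ (N *ᵥ ⇑(hA.eigenvectorBasis i)) := by
    intro i
    have h := hA.eigenvalues_eq i
    have h2 : (Nᵀ * N) *ᵥ ⇑(hA.eigenvectorBasis i)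
        = Nᵀ *ᵥ (N *ᵥ ⇑(hA.eigenvectorBasis i)) := (mulVec_mulVec _ _ _).symm
    rw [h2, ← dmv] at h
    simpa using h
  have hvv : ∀ i, (⇑(hA.eigenvectorBasis i) : Fin r → ℝ) ⬝ᵥ ⇑(hA.eigenvectorBasis i) = 1 := by
    intro i
    have h1 := hA.eigenvectorBasis.orthonormal.1 i
    have h2 := EuclideanSpace.inner_eq_star_dotProduct (𝕜 := ℝ)
      (hA.eigenvectorBasis i) (hA.eigenvectorBasis i)
    rw [real_inner_self_eq_norm_sq, h1] at h2
    simpa using h2.symm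
  have hd_nonneg : ∀ i, 0 ≤ d i := by
    intro i
    rw [hd_eq i]; exact dot_self_nonneg _
  have hd_le : ∀ i, d i ≤ (1 + t) ^ 2 := by
    intro i
    set v : Fin r → ℝ := ⇑(hA.eigenvectorBasis i) with hv
    have hNv : N *ᵥ v = M *ᵥ v + t • v := by
      rw [hN, add_mulVec, smul_mulVec, one_mulVec]
    have haa : (M *ᵥ v) ⬝ᵥ (M *ᵥ v) ≤ 1 := by
      have h3 := hM v; rw [hvv i] at h3; exact h3
    have hax : (M *ᵥ v) ⬝ᵥ v ≤ 1 := by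
      have hcs := Finset.sum_mul_sq_le_sq_mul_sq Finset.univ (M *ᵥ v) v
      have h1 : ((M *ᵥ v) ⬝ᵥ v) ^ 2 ≤ ((M *ᵥ v) ⬝ᵥ (M *ᵥ v)) * (v ⬝ᵥ v) := by
        simpa [dotProduct, pow_two] using hcs
      rw [hvv i, mul_one] at h1
      nlinarith [haa, dot_self_nonneg (M *ᵥ v)]
    have hexp : (N *ᵥ v) ⬝ᵥ (N *ᵥ v)
        = (M *ᵥ v) ⬝ᵥ (M *ᵥ v) + 2 * t * ((M *ᵥ v) ⬝ᵥ v) + t ^ 2 * (v ⬝ᵥ v) := by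
      rw [hNv]
      rw [dotProduct_add, add_dotProduct, add_dotProduct, dotProduct_smul,
        dotProduct_smul, smul_dotProduct, smul_dotProduct,
        dotProduct_comm v (M *ᵥ v)]
      simp [smul_eq_mul]
      ring
    rw [hd_eq i, hexp, hvv i]
    nlinarith [haa, hax, ht.le]
  have hdetN : det N ≠ 0 := by
    intro h
    exact ((isUnit_iff_isUnit_det N).mp hinv).ne_zero (by simpa using h)
  have hd_ne : ∀ i, d i ≠ 0 := by
    have hdet : det (Nᵀ * N) = ∏ i, d i := by simpa using hA.det_eq_prod_eigenvalues
    have h4 : det (Nᵀ * N) ≠ 0 := by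
      rw [det_mul, det_transpose]; exact mul_ne_zero hdetN hdetN
    rw [hdet] at h4
    exact fun i => Finset.prod_ne_zero_iff.mp h4 i (Finset.mem_univ i)
  have hd_pos : ∀ i, 0 < d i := fun i => lt_of_le_of_ne (hd_nonneg i) (Ne.symm (hd_ne i))
  -- the orthogonal matrix
  set g : Fin r → ℝ := fun i => (Real.sqrt (d i))⁻¹ with hg
  set R : Matrix (Fin r) (Fin r) ℝ := Q * diagonal g * star Q with hR
  set O : Matrix (Fin r) (Fin r) ℝ := N * R with hO
  have hdiagstar : star (diagonal g) = diagonal g := by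
    rw [Matrix.star_eq_conjTranspose, diagonal_conjTranspose]
    simp
  have hRs : star R = R := by
    calc star R = star (star Q) * (star (diagonal g) * star Q) := by
          rw [hR, StarMul.star_mul (Q * diagonal g) (star Q),
            StarMul.star_mul Q (diagonal g)]
      _ = Q * (diagonal g * star Q) := by rw [star_star, hdiagstar]
      _ = R := by rw [hR, mul_assoc]
  have hRt : Rᵀ = R := by rw [← star_mat R, hRs]
  have hconj_mul : ∀ X Y : Matrix (Fin r) (Fin r) ℝ,
      (Q * X * star Q) * (Q * Y * star Q) = Q * (X * Y) * star Q := by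
    intro X Y
    simp only [Matrix.mul_assoc]
    rw [← Matrix.mul_assoc (star Q) Q (Y * star Q), hQ1, Matrix.one_mul]
  have hsqrt_ne : ∀ i, Real.sqrt (d i) ≠ 0 :=
    fun i => ne_of_gt (Real.sqrt_pos.mpr (hd_pos i))
  have hdgd : diagonal g * diagonal d * diagonal g = (1 : Matrix (Fin r) (Fin r) ℝ) := by
    have hfun : (fun i => g i * d i * g i) = fun _ : Fin r => (1:ℝ) := by
      funext i
      have hm : Real.sqrt (d i) * Real.sqrt (d i) = d i := Real.mul_self_sqrt (hd_nonneg i)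
      show (Real.sqrt (d i))⁻¹ * d i * (Real.sqrt (d i))⁻¹ = 1
      rw [← hm]
      field_simp
      rw [Real.sqrt_sq (Real.sqrt_nonneg _)]
      exact div_self (pow_ne_zero 2 (hsqrt_ne i))
    rw [diagonal_mul_diagonal, diagonal_mul_diagonal, hfun, diagonal_one]
  have hRAR : R * (Nᵀ * N) * R = 1 := by
    rw [hspec, hR, hconj_mul, hconj_mul, hdgd, Matrix.mul_one, hQ2]
  have hOO : Oᵀ * O = 1 := by
    rw [hO, transpose_mul, hRt, Matrix.mul_assoc, ← Matrix.mul_assoc Nᵀ N R,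
      ← Matrix.mul_assoc, hRAR]
  have hNO : Nᵀ * O = Q * diagonal (fun i => d i * g i) * star Q := by
    rw [hO, ← Matrix.mul_assoc, hspec, hR, hconj_mul, diagonal_mul_diagonal]
  have htrNO : (Nᵀ * O).trace = ∑ i, Real.sqrt (d i) := by
    rw [hNO, trace_mul_cycle, hQ1, Matrix.one_mul, trace_diagonal]
    congr 1
    funext i
    show d i * (Real.sqrt (d i))⁻¹ = Real.sqrt (d i)
    rw [← div_eq_mul_inv]
    exact Real.div_sqrt
  have htrO_le : O.trace ≤ (r : ℝ) := by
    have hdiag : ∀ i, O i i ≤ 1 := by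
      intro i
      have h1 : (Oᵀ * O) i i = 1 := by rw [hOO]; simp
      rw [Matrix.mul_apply] at h1
      have h2 : (O i i) ^ 2 ≤ ∑ k, Oᵀ i k * O k i := by
        rw [← Finset.sum_erase_add _ _ (Finset.mem_univ i)]
        have h3 : (0:ℝ) ≤ ∑ k ∈ Finset.univ.erase i, Oᵀ i k * O k i :=
          Finset.sum_nonneg fun k _ => by rw [transpose_apply]; exact mul_self_nonneg _
        rw [transpose_apply, ← pow_two] at *
        linarith
      rw [h1] at h2
      nlinarith
    calc O.trace = ∑ i, O i i := rfl
      _ ≤ ∑ _i : Fin r, (1:ℝ) := Finset.sum_le_sum fun i _ => hdiag i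
      _ = r := by simp
  have htrA : (Nᵀ * N).trace = ∑ i, d i := by
    rw [hspec, trace_mul_cycle, hQ1, Matrix.one_mul, trace_diagonal]
  have htrA' : (Nᵀ * N).trace = (Mᵀ * M).trace + 2 * t * M.trace + t ^ 2 * r := by
    have hexp : Nᵀ * N = Mᵀ * M + t • Mᵀ + t • M + (t * t) • (1 : Matrix (Fin r) (Fin r) ℝ) := by
      rw [hN, transpose_add, transpose_smul, transpose_one, add_mul, mul_add, mul_add,
        Matrix.smul_mul, Matrix.smul_mul, Matrix.mul_smul, Matrix.mul_smul, Matrix.one_mul,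
        Matrix.mul_one, smul_smul, Matrix.one_mul]
      abel
    rw [hexp, trace_add, trace_add, trace_add, trace_smul, trace_smul, trace_smul,
      trace_transpose, trace_one]
    simp [smul_eq_mul]
    ring
  have hsqrt_ge : ∀ i, d i / (1 + t) ≤ Real.sqrt (d i) := by
    intro i
    have h1 : Real.sqrt (d i) ≤ 1 + t := by
      have h2 := Real.sqrt_le_sqrt (hd_le i)
      rwa [Real.sqrt_sq (by linarith)] at h2
    have h2 : 0 < Real.sqrt (d i) := Real.sqrt_pos.mpr (hd_pos i)
    rw [div_le_iff₀ (by linarith : (0:ℝ) < 1 + t)]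
    calc d i = Real.sqrt (d i) * Real.sqrt (d i) := (Real.mul_self_sqrt (hd_nonneg i)).symm
      _ ≤ Real.sqrt (d i) * (1 + t) := by nlinarith
  have hMtr : (Mᵀ * O).trace = (Nᵀ * O).trace - t * O.trace := by
    have hMt : Mᵀ = Nᵀ - t • (1 : Matrix (Fin r) (Fin r) ℝ) := by
      rw [hN, transpose_add, transpose_smul, transpose_one]
      abel
    rw [hMt, Matrix.sub_mul, trace_sub, Matrix.smul_mul, trace_smul, Matrix.one_mul,
      smul_eq_mul]
  refine ⟨O, hOO, ?_⟩
  rw [hMtr, htrNO]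
  have hsum : (∑ i, d i) / (1 + t) ≤ ∑ i, Real.sqrt (d i) := by
    rw [Finset.sum_div]
    exact Finset.sum_le_sum fun i _ => hsqrt_ge i
  have hnum : (Mᵀ * M).trace + 2 * t * M.trace + t ^ 2 * r = ∑ i, d i := by
    rw [← htrA', htrA]
  rw [hnum]
  have h5 : t * O.trace ≤ t * r := by
    exact mul_le_mul_of_nonneg_left htrO_le ht.le
  linarith

lemma exists_orth (M : Matrix (Fin r) (Fin r) ℝ)
    (hM : ∀ x : Fin r → ℝ, (M *ᵥ x) ⬝ᵥ (M *ᵥ x) ≤ x ⬝ᵥ x) :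
    ∃ O : Matrix (Fin r) (Fin r) ℝ, Oᵀ * O = 1 ∧ (Mᵀ * M).trace ≤ (Mᵀ * O).trace := by
  classical
  -- the bad set of parameters is finite
  have hBfin : {s : ℝ | ¬ IsUnit (M + s • (1 : Matrix (Fin r) (Fin r) ℝ))}.Finite := by
    have hsub : {s : ℝ | ¬ IsUnit (M + s • (1 : Matrix (Fin r) (Fin r) ℝ))}
        ⊆ (fun s : ℝ => -s) ⁻¹' (spectrum ℝ M) := by
      intro s hs
      simp only [Set.mem_preimage, spectrum.mem_iff, Algebra.algebraMap_eq_smul_one]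
      intro hunit
      apply hs
      have heq : -((-s) • (1 : Matrix (Fin r) (Fin r) ℝ) - M)
          = M + s • (1 : Matrix (Fin r) (Fin r) ℝ) := by
        rw [neg_smul]; abel
      rw [← heq]
      exact hunit.neg
    exact ((Matrix.finite_spectrum M).preimage (neg_injective.injOn)).subset hsub
  -- a sequence of good parameters tending to 0
  have hex : ∀ k : ℕ, ∃ s : ℝ, s ∈ Set.Ioo (0:ℝ) (1 / ((k:ℝ) + 1))
      ∧ IsUnit (M + s • (1 : Matrix (Fin r) (Fin r) ℝ)) := by
    intro k
    have hIoo : (Set.Ioo (0:ℝ) (1 / ((k:ℝ) + 1))).Infinite :=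
      Set.Ioo_infinite (by positivity)
    obtain ⟨s, hs⟩ := (hIoo.diff hBfin).nonempty
    exact ⟨s, hs.1, not_not.mp hs.2⟩
  choose t ht1 ht2 using hex
  have ht0 : Filter.Tendsto t Filter.atTop (nhds 0) := by
    refine tendsto_of_tendsto_of_tendsto_of_le_of_le tendsto_const_nhds
      tendsto_one_div_add_atTop_nhds_zero_nat (fun k => (ht1 k).1.le) (fun k => (ht1 k).2.le)
  have hstep : ∀ k : ℕ, ∃ O : Matrix (Fin r) (Fin r) ℝ, Oᵀ * O = 1 ∧
      ((Mᵀ * M).trace + 2 * (t k) * M.trace + (t k) ^ 2 * r) / (1 + t k) - (t k) * r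
        ≤ (Mᵀ * O).trace :=
    fun k => step M hM (ht1 k).1 (ht2 k)
  choose O hO1 hO2 using hstep
  -- compactness of the orthogonal set
  set C : Set (Matrix (Fin r) (Fin r) ℝ) := {X | Xᵀ * X = 1} with hC
  have hCsub : C ⊆ Set.pi Set.univ (fun _ : Fin r =>
      Set.pi Set.univ fun _ : Fin r => Set.Icc (-1:ℝ) 1) := by
    intro X hX i _ j _
    have h1 : (Xᵀ * X) j j = 1 := by rw [hX]; simp
    rw [Matrix.mul_apply] at h1
    have h2 : X i j * X i j ≤ ∑ k, Xᵀ j k * X k j := by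
      rw [← Finset.sum_erase_add _ _ (Finset.mem_univ i), transpose_apply]
      have h3 : (0:ℝ) ≤ ∑ k ∈ Finset.univ.erase i, Xᵀ j k * X k j :=
        Finset.sum_nonneg fun k _ => by rw [transpose_apply]; exact mul_self_nonneg _
      linarith
    rw [h1] at h2
    constructor <;> nlinarith
  have hKcomp : IsCompact (Set.pi Set.univ (fun _ : Fin r =>
      Set.pi Set.univ fun _ : Fin r => Set.Icc (-1:ℝ) 1)) :=
    isCompact_univ_pi fun _ => isCompact_univ_pi fun _ => isCompact_Icc
  have hCclosed : IsClosed C := by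
    have hcont : Continuous fun X : Matrix (Fin r) (Fin r) ℝ => Xᵀ * X :=
      (continuous_id.matrix_transpose).matrix_mul continuous_id
    exact isClosed_eq hcont continuous_const
  have hCcomp : IsCompact C := hKcomp.of_isClosed_subset hCclosed hCsub
  have : FirstCountableTopology (Matrix (Fin r) (Fin r) ℝ) :=
    inferInstanceAs (FirstCountableTopology (Fin r → Fin r → ℝ))
  obtain ⟨W, hWC, φ, hφ, hconv⟩ := hCcomp.tendsto_subseq (fun k => hO1 k)
  have hf : Continuous fun X : Matrix (Fin r) (Fin r) ℝ => (Mᵀ * X).trace :=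
    (continuous_const.matrix_mul continuous_id).matrix_trace
  have hfO : Filter.Tendsto (fun j => (Mᵀ * O (φ j)).trace) Filter.atTop
      (nhds ((Mᵀ * W).trace)) := (hf.tendsto W).comp hconv
  set G : ℝ → ℝ := fun s =>
    ((Mᵀ * M).trace + 2 * s * M.trace + s ^ 2 * r) / (1 + s) - s * r with hGdef
  have hGcont : ContinuousAt G 0 := by
    apply ContinuousAt.sub
    · exact ContinuousAt.div (by fun_prop) (by fun_prop) (by norm_num)
    · fun_prop
  have hG0 : G 0 = (Mᵀ * M).trace := by simp [hGdef]
  have hGt : Filter.Tendsto (fun j => G (t (φ j))) Filter.atTop (nhds ((Mᵀ * M).trace)) := by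
    rw [← hG0]
    exact (hGcont.tendsto).comp (ht0.comp hφ.tendsto_atTop)
  exact ⟨W, hWC, le_of_tendsto_of_tendsto' hGt hfO (fun j => hO2 (φ j))⟩

end ProcrustesAux

open Matrix in
/-- Procrustes-versus-projection bound: for `n×r` matrices `S`, `U` with
orthonormal columns, some orthogonal `r×r` matrix `O` satisfies
`‖S − U·O‖_F ≤ √2 · ‖S·Sᵀ·(I − U·Uᵀ)‖_F`. -/
theorem procrustes_projection_bound
    (n r : ℕ) (hr : 1 ≤ r) (hnr : r ≤ n)
    (S U : Matrix (Fin n) (Fin r) ℝ)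
    (hS : Sᵀ * S = 1) (hU : Uᵀ * U = 1) :
    ∃ O : Matrix (Fin r) (Fin r) ℝ, Oᵀ * O = 1 ∧ O * Oᵀ = 1 ∧
      frobNorm (S - U * O) ≤ Real.sqrt 2 * frobNorm (S * Sᵀ * (1 - U * Uᵀ)) := by
  set M : Matrix (Fin r) (Fin r) ℝ := Uᵀ * S with hMdef
  have hMT : Mᵀ = Sᵀ * U := by rw [hMdef, transpose_mul, transpose_transpose]
  -- contraction property
  have hM : ∀ x : Fin r → ℝ, (M *ᵥ x) ⬝ᵥ (M *ᵥ x) ≤ x ⬝ᵥ x := by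
    intro x
    set y : Fin n → ℝ := S *ᵥ x with hy
    set z : Fin r → ℝ := Uᵀ *ᵥ y with hz
    have hMx : M *ᵥ x = z := by rw [hMdef, ← mulVec_mulVec]
    have hyy : y ⬝ᵥ y = x ⬝ᵥ x := by
      rw [hy, dmv, mulVec_mulVec, hS, one_mulVec]
    have hyUz : y ⬝ᵥ (U *ᵥ z) = z ⬝ᵥ z := by
      rw [dotProduct_comm, dmv, ← hz]
    have hUzUz : (U *ᵥ z) ⬝ᵥ (U *ᵥ z) = z ⬝ᵥ z := by
      rw [dmv, mulVec_mulVec, hU, one_mulVec]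
    have hw : (0:ℝ) ≤ (y - U *ᵥ z) ⬝ᵥ (y - U *ᵥ z) := dot_self_nonneg _
    have hexp : (y - U *ᵥ z) ⬝ᵥ (y - U *ᵥ z) = y ⬝ᵥ y - z ⬝ᵥ z := by
      rw [dotProduct_sub, sub_dotProduct, sub_dotProduct,
        dotProduct_comm (U *ᵥ z) y, hyUz, hUzUz]
      ring
    rw [hMx]
    rw [hexp] at hw
    linarith [hyy ▸ hw]
  obtain ⟨O, hOO, htr⟩ := exists_orth M hM
  refine ⟨O, hOO, mul_eq_one_comm.mp hOO, ?_⟩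
  -- trace computations
  have hcard : ((1 : Matrix (Fin r) (Fin r) ℝ)).trace = (r : ℝ) := by
    rw [trace_one]; simp
  have e1 : ((S - U * O)ᵀ * (S - U * O)).trace = 2 * r - 2 * (Mᵀ * O).trace := by
    have h1 : ((S - U * O)ᵀ * (S - U * O)).trace
        = (Sᵀ * S).trace - (Sᵀ * (U * O)).trace - ((U * O)ᵀ * S).trace
          + ((U * O)ᵀ * (U * O)).trace := by
      simp only [transpose_sub, Matrix.sub_mul, Matrix.mul_sub, trace_sub]
      ring
    have h2 : Sᵀ * (U * O) = Mᵀ * O := by rw [hMT, Matrix.mul_assoc]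
    have h3 : (U * O)ᵀ * S = (Mᵀ * O)ᵀ := by
      rw [transpose_mul, transpose_mul, transpose_transpose, hMdef, Matrix.mul_assoc]
    have h4 : (U * O)ᵀ * (U * O) = 1 := by
      rw [transpose_mul, Matrix.mul_assoc, ← Matrix.mul_assoc Uᵀ U O, hU,
        Matrix.one_mul, hOO]
    rw [h1, h2, h3, h4, hS, hcard, trace_transpose]
    ring
  have e2 : ((S * Sᵀ * (1 - U * Uᵀ))ᵀ * (S * Sᵀ * (1 - U * Uᵀ))).trace
      = (r : ℝ) - (Mᵀ * M).trace := by
    set P : Matrix (Fin n) (Fin n) ℝ := 1 - U * Uᵀ with hPdef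
    have hPt : Pᵀ = P := by
      rw [hPdef, transpose_sub, transpose_one, transpose_mul, transpose_transpose]
    have hPP : P * P = P := by
      have hUU : (U * Uᵀ) * (U * Uᵀ) = U * Uᵀ := by
        rw [Matrix.mul_assoc, ← Matrix.mul_assoc Uᵀ U Uᵀ, hU, Matrix.one_mul]
      rw [hPdef, Matrix.sub_mul, Matrix.mul_sub, Matrix.mul_sub, Matrix.one_mul,
        Matrix.mul_one, hUU]
      simp only [Matrix.one_mul]
      abel
    have hXt : (S * Sᵀ * P)ᵀ = P * (S * Sᵀ) := by
      rw [transpose_mul, hPt, transpose_mul, transpose_transpose]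
    have key : (S * Sᵀ * P)ᵀ * (S * Sᵀ * P) = P * S * Sᵀ * P := by
      rw [hXt]
      calc P * (S * Sᵀ) * (S * Sᵀ * P)
          = P * S * ((Sᵀ * S) * (Sᵀ * P)) := by simp only [Matrix.mul_assoc]
        _ = P * S * (Sᵀ * P) := by rw [hS, Matrix.one_mul]
        _ = P * S * Sᵀ * P := by simp only [Matrix.mul_assoc]
    have hSPS : Sᵀ * P * S = 1 - Mᵀ * M := by
      rw [hPdef, Matrix.mul_sub, Matrix.mul_one, Matrix.sub_mul, hS, hMT, hMdef]
      simp only [Matrix.mul_assoc]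
    calc ((S * Sᵀ * P)ᵀ * (S * Sᵀ * P)).trace = (P * S * Sᵀ * P).trace := by rw [key]
      _ = (P * (P * S) * Sᵀ).trace := by rw [trace_mul_cycle]
      _ = (P * S * Sᵀ).trace := by rw [← Matrix.mul_assoc, hPP]
      _ = (Sᵀ * P * S).trace := by rw [trace_mul_cycle]
      _ = (1 - Mᵀ * M).trace := by rw [hSPS]
      _ = (r : ℝ) - (Mᵀ * M).trace := by rw [trace_sub, hcard]
  rw [frobNorm, frobNorm, e1, e2]
  have hnn : (0:ℝ) ≤ 2 := by norm_num
  calc Real.sqrt (2 * r - 2 * (Mᵀ * O).trace)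
      ≤ Real.sqrt (2 * ((r : ℝ) - (Mᵀ * M).trace)) := Real.sqrt_le_sqrt (by linarith)
    _ = Real.sqrt 2 * Real.sqrt ((r : ℝ) - (Mᵀ * M).trace) := Real.sqrt_mul hnn _
end

section
/- Let g and ĝ be unit vectors in ℝⁿ. Then min(‖g − ĝ‖₂, ‖g + ĝ‖₂) ≤ √2 · ‖g gᵀ (I − ĝ ĝᵀ)‖_F, where g gᵀ and ĝ ĝᵀ denote the rank-one n×n matrices with entries g_i g_j and ĝ_i ĝ_j respectively, and ‖·‖_F denotes the Frobenius norm (‖A‖_F² = tr(AᵀA)). -/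
open scoped Matrix

/-- Rank-one Procrustes bound: for unit vectors `g`, `ĝ`,
`min(‖g − ĝ‖, ‖g + ĝ‖) ≤ √2 · ‖g gᵀ (I − ĝ ĝᵀ)‖_F`. -/
theorem rank_one_procrustes_bound
    (n : ℕ) (g ghat : EuclideanSpace ℝ (Fin n))
    (hg : ‖g‖ = 1) (hghat : ‖ghat‖ = 1) :
    min ‖g - ghat‖ ‖g + ghat‖ ≤
      Real.sqrt 2 *
        frobNorm (Matrix.vecMulVec (fun i => g i) (fun i => g i) *
          (1 - Matrix.vecMulVec (fun i => ghat i) (fun i => ghat i))) := by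
  set c : ℝ := ∑ i, g i * ghat i with hc
  have hinner : (inner ℝ g ghat : ℝ) = c := by
    simp [PiLp.inner_apply, RCLike.inner_apply, hc, mul_comm]
  have hgg : ∑ i, g i ^ 2 = 1 := by
    have h := EuclideanSpace.norm_eq g
    rw [hg] at h
    have h2 : Real.sqrt (∑ i, ‖g i‖ ^ 2) = 1 := h.symm
    rw [Real.sqrt_eq_one] at h2
    simpa [Real.norm_eq_abs, sq_abs] using h2
  have hhh : ∑ i, ghat i ^ 2 = 1 := by
    have h := EuclideanSpace.norm_eq ghat
    rw [hghat] at h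
    have h2 : Real.sqrt (∑ i, ‖ghat i‖ ^ 2) = 1 := h.symm
    rw [Real.sqrt_eq_one] at h2
    simpa [Real.norm_eq_abs, sq_abs] using h2
  set A := Matrix.vecMulVec (fun i => g i) (fun i => g i) *
          (1 - Matrix.vecMulVec (fun i => ghat i) (fun i => ghat i)) with hAdef
  have hA : ∀ i j, A i j = g i * (g j - c * ghat j) := by
    intro i j
    simp only [hAdef, Matrix.mul_apply, Matrix.vecMulVec_apply, Matrix.sub_apply,
      Matrix.one_apply, mul_sub, Finset.sum_sub_distrib, mul_ite, mul_zero, mul_one,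
      Finset.sum_ite_eq', Finset.mem_univ, if_true]
    have h3 : ∑ x, g i * g x * (ghat x * ghat j)
        = g i * ((∑ x, g x * ghat x) * ghat j) := by
      rw [Finset.sum_mul, Finset.mul_sum]
      exact Finset.sum_congr rfl fun k _ => by ring
    rw [h3, ← hc]
  have htr : (Aᵀ * A).trace = 1 - c ^ 2 := by
    have h0 : (Aᵀ * A).trace = ∑ j, ∑ i, A i j * A i j := by
      simp [Matrix.trace, Matrix.mul_apply, Matrix.diag]
    rw [h0]
    have h4 : ∀ j : Fin n, ∑ i, A i j * A i j
        = (∑ i, g i ^ 2) * (g j - c * ghat j) ^ 2 := by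
      intro j
      rw [Finset.sum_mul]
      exact Finset.sum_congr rfl fun i _ => by rw [hA]; ring
    simp only [h4, hgg, one_mul]
    have expand : ∀ j : Fin n, (g j - c * ghat j) ^ 2
        = g j ^ 2 - 2 * c * (g j * ghat j) + c ^ 2 * ghat j ^ 2 := fun j => by ring
    simp only [expand]
    rw [Finset.sum_add_distrib, Finset.sum_sub_distrib, ← Finset.mul_sum, ← Finset.mul_sum,
      hgg, hhh, ← hc]
    ring
  have hcle : |c| ≤ 1 := by
    have := abs_real_inner_le_norm g ghat
    rw [hinner, hg, hghat] at this
    simpa using this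
  have hfrob : frobNorm A = Real.sqrt (1 - c ^ 2) := by rw [frobNorm, htr]
  rw [hfrob, ← Real.sqrt_mul (by norm_num : (0:ℝ) ≤ 2)]
  have key : ∀ x : ℝ, 0 ≤ x → x ^ 2 ≤ 2 * (1 - c ^ 2) → x ≤ Real.sqrt (2 * (1 - c ^ 2)) :=
    fun x hx h => (Real.le_sqrt hx ((sq_nonneg x).trans h)).mpr h
  rcases le_or_gt 0 c with hcpos | hcneg
  · refine le_trans (min_le_left _ _) (key _ (norm_nonneg _) ?_)
    have hsq : ‖g - ghat‖ ^ 2 = 2 - 2 * c := by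
      rw [norm_sub_sq_real, hinner, hg, hghat]; ring
    rw [hsq]
    nlinarith [abs_le.mp hcle]
  · refine le_trans (min_le_right _ _) (key _ (norm_nonneg _) ?_)
    have hsq : ‖g + ghat‖ ^ 2 = 2 + 2 * c := by
      rw [norm_add_sq_real, hinner, hg, hghat]; ring
    rw [hsq]
    nlinarith [abs_le.mp hcle]
end
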